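/- arXiv:1402.0834 — 3 statements merged into one kernel-verified Lean document; each statement's English description precedes it below -/
import Mathlib

section
/- Let d ≥ 2, r ≥ 11, let i be a coordinate (1 ≤ i ≤ d), and let s be an integer with |s| ≤ r−3. Then the set A = {x ∈ ℤ^d : ‖x‖₁ ∈ {r−1, r−2} and x_i > s} is nonempty and induces a connected subgraph of the grid graph: any two points of A are joined by a path all of whose vertices lie in A. -/
/-- The `ℓ1`-norm of a point of `ℤ^d`. -/
def norm1 {d : ℕ} (x : Fin d → ℤ) : ℤ := ∑ i, |x i|

/-- Grid adjacency in `ℤ^d`: `u` and `v` are adjacent iff `‖u - v‖₁ = 1`. -/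
def Adj {d : ℕ} (u v : Fin d → ℤ) : Prop := norm1 (u - v) = 1

namespace Statement6Aux

lemma norm1_nonneg {d} (x : Fin d → ℤ) : 0 ≤ norm1 x :=
  Finset.sum_nonneg fun _ _ => abs_nonneg _

lemma abs_le_norm1 {d} (x : Fin d → ℤ) (j : Fin d) : |x j| ≤ norm1 x :=
  Finset.single_le_sum (f := fun k => |x k|) (fun _ _ => abs_nonneg _) (Finset.mem_univ j)

lemma norm1_update {d} (x : Fin d → ℤ) (j : Fin d) (v : ℤ) :
    norm1 (Function.update x j v) = norm1 x - |x j| + |v| := by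
  unfold norm1
  rw [← Finset.add_sum_erase _ (fun k => |Function.update x j v k|) (Finset.mem_univ j),
      ← Finset.add_sum_erase _ (fun k => |x k|) (Finset.mem_univ j)]
  rw [Finset.sum_congr rfl (fun k hk => by
    rw [Function.update_of_ne (Finset.ne_of_mem_erase hk)])]
  simp [Function.update_self]
  ring

lemma adj_update {d} (x : Fin d → ℤ) (j : Fin d) (e : ℤ) (he : |e| = 1) :
    Adj x (Function.update x j (x j + e)) := by
  unfold Adj norm1
  have h : ∀ k, |(x - Function.update x j (x j + e)) k| = if k = j then |e| else 0 := by
    intro k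
    by_cases hk : k = j
    · subst hk; simp [Pi.sub_apply, Function.update_self, abs_sub_comm]
    · simp [Pi.sub_apply, Function.update_of_ne hk, hk]
  rw [Finset.sum_congr rfl (fun k _ => h k), Finset.sum_ite_eq' Finset.univ j]
  simp [he]

def G (d : ℕ) : SimpleGraph (Fin d → ℤ) where
  Adj := Adj
  symm := by
    constructor
    intro u v h
    unfold Adj norm1 at *
    rw [← h]
    exact Finset.sum_congr rfl fun k _ => by simp [Pi.sub_apply, abs_sub_comm]
  loopless := by constructor; intro u h; simp [Adj, norm1] at h

end Statement6Aux

namespace Statement6Aux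

lemma sum_erase_abs {d} (x : Fin d → ℤ) (i : Fin d) :
    ∑ j ∈ Finset.univ.erase i, |x j| = norm1 x - |x i| := by
  unfold norm1
  rw [← Finset.add_sum_erase _ (fun k => |x k|) (Finset.mem_univ i)]
  ring

lemma key {d : ℕ} (hd : 2 ≤ d) (r : ℤ) (hr : 11 ≤ r) (i : Fin d) (s : ℤ)
    (hs : |s| ≤ r - 3) :
    ∀ n : ℕ, ∀ a : Fin d → ℤ, ∀ (ha : norm1 a = r - 1) (hai : s < a i),
      (2 * (r - 1 - a i) + norm1 a - |a i|).toNat = n →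
      (SimpleGraph.induce {x : Fin d → ℤ | (norm1 x = r - 1 ∨ norm1 x = r - 2) ∧ s < x i} (G d)).Reachable
        ⟨a, ⟨Or.inl ha, hai⟩⟩
        ⟨Function.update (0 : Fin d → ℤ) i (r - 1),
          ⟨Or.inl (by rw [norm1_update]; simp [norm1]; omega),
           by rw [Function.update_self]; cases abs_le.mp hs; omega⟩⟩ := by
  intro n
  induction n using Nat.strong_induction_on with
  | _ n IH =>
    intro a ha hai hn
    have hsle : s ≤ r - 3 := (abs_le.mp hs).2
    have hsge : -(r-3) ≤ s := (abs_le.mp hs).1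
    have haile : a i ≤ r - 1 := by
      have := abs_le_norm1 a i
      have := le_abs_self (a i)
      omega
    by_cases hcase : a i = r - 1
    · -- a = p0
      have hall : ∀ j, a j = Function.update (0 : Fin d → ℤ) i (r - 1) j := by
        have hsum : ∑ j ∈ Finset.univ.erase i, |a j| = 0 := by
          rw [sum_erase_abs, ha, hcase, abs_of_nonneg (by omega)]; ring
        have hzero : ∀ j ∈ Finset.univ.erase i, |a j| = 0 :=
          (Finset.sum_eq_zero_iff_of_nonneg (fun j _ => abs_nonneg _)).mp hsum
        intro j
        by_cases hj : j = i
        · subst hj; rw [Function.update_self]; exact hcase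
        · rw [Function.update_of_ne hj]
          have := hzero j (Finset.mem_erase.mpr ⟨hj, Finset.mem_univ j⟩)
          simpa [abs_eq_zero] using this
      have : a = Function.update (0 : Fin d → ℤ) i (r - 1) := funext hall
      subst this
      exact SimpleGraph.Reachable.refl _
    · have hailt : a i < r - 1 := lt_of_le_of_ne haile hcase
      by_cases hneg : a i < 0
      · -- negative phase
        set b := Function.update a i (a i + 1) with hb
        have habs1 : |a i| = -(a i) := abs_of_neg hneg
        have habs2 : |a i + 1| = -(a i + 1) := abs_of_nonpos (by omega)
        have hnb : norm1 b = r - 2 := by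
          rw [hb, norm1_update]; omega
        have hbi : b i = a i + 1 := Function.update_self ..
        have hbmem : b ∈ {x : Fin d → ℤ | (norm1 x = r - 1 ∨ norm1 x = r - 2) ∧ s < x i} :=
          ⟨Or.inr hnb, by rw [hbi]; omega⟩
        have hadj1 : Adj a b := adj_update a i 1 (by norm_num)
        obtain ⟨j, hj⟩ := Fintype.exists_ne_of_one_lt_card (by simp; omega) i
        set e : ℤ := if 0 ≤ b j then 1 else -1 with he
        set c := Function.update b j (b j + e) with hc
        have habs3 : |b j + e| = |b j| + 1 := by
          rw [he]; split_ifs with h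
          · rw [abs_of_nonneg h, abs_of_nonneg (by omega)]
          · rw [abs_of_neg (by omega), abs_of_neg (by omega)]; ring
        have hnc : norm1 c = r - 1 := by rw [hc, norm1_update]; omega
        have hci : c i = a i + 1 := by
          rw [hc, Function.update_of_ne (Ne.symm hj), hbi]
        have hcai : s < c i := by omega
        have hadj2 : Adj b c := adj_update b j e (by rw [he]; split_ifs <;> norm_num)
        have hmeas : (2 * (r - 1 - c i) + norm1 c - |c i|).toNat < n := by
          have habs4 : |c i| = -(c i) := by rw [hci]; exact abs_of_nonpos (by omega)
          omega
        have step1 : (SimpleGraph.induce {x : Fin d → ℤ | (norm1 x = r - 1 ∨ norm1 x = r - 2) ∧ s < x i} (G d)).Adj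
            ⟨a, ⟨Or.inl ha, hai⟩⟩ ⟨b, hbmem⟩ := hadj1
        have step2 : (SimpleGraph.induce {x : Fin d → ℤ | (norm1 x = r - 1 ∨ norm1 x = r - 2) ∧ s < x i} (G d)).Adj
            ⟨b, hbmem⟩ ⟨c, ⟨Or.inl hnc, hcai⟩⟩ := hadj2
        exact step1.reachable.trans (step2.reachable.trans
          (IH _ hmeas c hnc hcai rfl))
      · -- nonnegative phase
        push_neg at hneg
        have habs1 : |a i| = a i := abs_of_nonneg hneg
        have hsumpos : ∑ j ∈ Finset.univ.erase i, |a j| ≠ 0 := by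
          rw [sum_erase_abs, ha]; omega
        obtain ⟨j, hjmem, hja⟩ := Finset.exists_ne_zero_of_sum_ne_zero hsumpos
        have hj : j ≠ i := (Finset.mem_erase.mp hjmem).1
        have hja' : a j ≠ 0 := by simpa [abs_eq_zero] using hja
        set e : ℤ := if 0 < a j then -1 else 1 with he
        set b := Function.update a j (a j + e) with hb
        have habs2 : |a j + e| = |a j| - 1 := by
          rw [he]; split_ifs with h
          · rw [abs_of_nonneg (by omega), abs_of_nonneg (by omega)]; ring
          · rw [abs_of_nonpos (by omega), abs_of_neg (by omega)]; ring
        have hnb : norm1 b = r - 2 := by rw [hb, norm1_update]; omega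
        have hbi : b i = a i := by rw [hb, Function.update_of_ne (Ne.symm hj)]
        have hbmem : b ∈ {x : Fin d → ℤ | (norm1 x = r - 1 ∨ norm1 x = r - 2) ∧ s < x i} :=
          ⟨Or.inr hnb, by rw [hbi]; omega⟩
        have hadj1 : Adj a b := adj_update a j e (by rw [he]; split_ifs <;> norm_num)
        set c := Function.update b i (b i + 1) with hc
        have habs3 : |b i + 1| = |b i| + 1 := by
          rw [hbi, abs_of_nonneg (by omega), abs_of_nonneg (by omega)]
        have hnc : norm1 c = r - 1 := by rw [hc, norm1_update]; omega
        have hci : c i = a i + 1 := by rw [hc, Function.update_self, hbi]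
        have hcai : s < c i := by omega
        have hadj2 : Adj b c := adj_update b i 1 (by norm_num)
        have hmeas : (2 * (r - 1 - c i) + norm1 c - |c i|).toNat < n := by
          have habs4 : |c i| = c i := by rw [hci]; exact abs_of_nonneg (by omega)
          omega
        have step1 : (SimpleGraph.induce {x : Fin d → ℤ | (norm1 x = r - 1 ∨ norm1 x = r - 2) ∧ s < x i} (G d)).Adj
            ⟨a, ⟨Or.inl ha, hai⟩⟩ ⟨b, hbmem⟩ := hadj1
        have step2 : (SimpleGraph.induce {x : Fin d → ℤ | (norm1 x = r - 1 ∨ norm1 x = r - 2) ∧ s < x i} (G d)).Adj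
            ⟨b, hbmem⟩ ⟨c, ⟨Or.inl hnc, hcai⟩⟩ := hadj2
        exact step1.reachable.trans (step2.reachable.trans
          (IH _ hmeas c hnc hcai rfl))

end Statement6Aux

namespace Statement6Aux

lemma key2 {d : ℕ} (hd : 2 ≤ d) (r : ℤ) (hr : 11 ≤ r) (i : Fin d) (s : ℤ)
    (hs : |s| ≤ r - 3) (a : Fin d → ℤ)
    (ha : a ∈ {x : Fin d → ℤ | (norm1 x = r - 1 ∨ norm1 x = r - 2) ∧ s < x i}) :
    (SimpleGraph.induce {x : Fin d → ℤ | (norm1 x = r - 1 ∨ norm1 x = r - 2) ∧ s < x i} (G d)).Reachable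
      ⟨a, ha⟩
      ⟨Function.update (0 : Fin d → ℤ) i (r - 1),
        ⟨Or.inl (by rw [norm1_update]; simp [norm1]; omega),
         by rw [Function.update_self]; cases abs_le.mp hs; omega⟩⟩ := by
  obtain ⟨hn, hai⟩ := ha
  rcases hn with hn | hn
  · exact key hd r hr i s hs _ a hn hai rfl
  · -- norm r - 2 : bump a coordinate j ≠ i away from zero
    obtain ⟨j, hj⟩ := Fintype.exists_ne_of_one_lt_card (by simp; omega) i
    set e : ℤ := if 0 ≤ a j then 1 else -1 with he
    set b := Function.update a j (a j + e) with hb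
    have habs : |a j + e| = |a j| + 1 := by
      rw [he]; split_ifs with h
      · rw [abs_of_nonneg h, abs_of_nonneg (by omega)]
      · rw [abs_of_neg (by omega), abs_of_neg (by omega)]; ring
    have hnb : norm1 b = r - 1 := by rw [hb, norm1_update]; omega
    have hbi : b i = a i := by rw [hb, Function.update_of_ne (Ne.symm hj)]
    have hbai : s < b i := by omega
    have hadj : Adj a b := adj_update a j e (by rw [he]; split_ifs <;> norm_num)
    have step : (SimpleGraph.induce {x : Fin d → ℤ | (norm1 x = r - 1 ∨ norm1 x = r - 2) ∧ s < x i} (G d)).Adj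
        ⟨a, ⟨Or.inr hn, hai⟩⟩ ⟨b, ⟨Or.inl hnb, hbai⟩⟩ := hadj
    exact step.reachable.trans (key hd r hr i s hs _ b hnb hbai rfl)

end Statement6Aux


theorem statement6 (d : ℕ) (hd : 2 ≤ d) (r : ℤ) (hr : 11 ≤ r) (i : Fin d)
    (s : ℤ) (hs : |s| ≤ r - 3) :
    letI A : Set (Fin d → ℤ) :=
      {x | (norm1 x = r - 1 ∨ norm1 x = r - 2) ∧ s < x i}
    A.Nonempty ∧
      ∀ a ∈ A, ∀ b ∈ A,
        ∃ (L : List (Fin d → ℤ)) (h : L ≠ []),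
          L.Nodup ∧ L.Chain' Adj ∧ L.head h = a ∧ L.getLast h = b ∧
          ∀ x ∈ L, x ∈ A := by
  set A : Set (Fin d → ℤ) := {x | (norm1 x = r - 1 ∨ norm1 x = r - 2) ∧ s < x i} with hA
  have hp0 : Function.update (0 : Fin d → ℤ) i (r - 1) ∈ A :=
    ⟨Or.inl (by rw [Statement6Aux.norm1_update]; simp [norm1]; omega),
     by rw [Function.update_self]; cases abs_le.mp hs; omega⟩
  refine ⟨⟨_, hp0⟩, ?_⟩
  intro a ha b hb
  have hreach : (SimpleGraph.induce A (Statement6Aux.G d)).Reachable ⟨a, ha⟩ ⟨b, hb⟩ :=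
    (Statement6Aux.key2 hd r hr i s hs a ha).trans
      (Statement6Aux.key2 hd r hr i s hs b hb).symm
  obtain ⟨w⟩ := hreach
  set q := w.toPath with hq
  refine ⟨q.1.support.map Subtype.val, fun h => q.1.support_ne_nil (List.map_eq_nil_iff.mp h), ?_, ?_, ?_, ?_, ?_⟩
  · exact q.2.support_nodup.map Subtype.val_injective
  · exact List.isChain_map_of_isChain (S := Adj) Subtype.val (fun u v h => h) (SimpleGraph.Walk.isChain_adj_support q.1)
  · rw [List.head_map, SimpleGraph.Walk.head_support]
  · rw [List.getLast_map, SimpleGraph.Walk.getLast_support]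
  · intro x hx
    obtain ⟨y, _, rfl⟩ := List.mem_map.mp hx
    exact y.2
end

section
/- Let d ≥ 2, r ≥ 1, and let u and v be distinct points of S^∞_r in ℤ^d. Then there exist two paths Q₁ and Q₂ in the grid graph, all of whose vertices lie in S^∞_r, which are vertex-disjoint (no vertex belongs to both), such that one of them joins u to one of the points e_r, −e_r and the other joins v to the other of these two points. (A single vertex counts as a path of length 0, to cover the case where u or v equals e_r or −e_r.) -/
/-- The `ℓ∞`-sphere `S^∞_r = {v : ‖v‖_∞ = r}` in `ℤ^d`. -/
def Sinf (d : ℕ) (r : ℤ) : Set (Fin d → ℤ) := {x | (∀ i, |x i| ≤ r) ∧ ∃ i, |x i| = r}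

/-- The point `e_m = (m, 0, …, 0)` of `ℤ^d`. -/
def eVec (d : ℕ) (m : ℤ) : Fin d → ℤ := fun i => if (i : ℕ) = 0 then m else 0

/-- `L` is a path from `x` to `y` all of whose vertices lie in `A`; a single
vertex counts as a path of length `0`. -/
def IsPathInFromTo {d : ℕ} (A : Set (Fin d → ℤ)) (L : List (Fin d → ℤ))
    (x y : Fin d → ℤ) : Prop :=
  ∃ h : L ≠ [],
    L.Nodup ∧ L.Chain' Adj ∧ (∀ z ∈ L, z ∈ A) ∧ L.head h = x ∧ L.getLast h = y

variable {d : ℕ}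

def btwn (a b t : ℤ) : Prop := (a ≤ t ∧ t ≤ b) ∨ (b ≤ t ∧ t ≤ a)

lemma adj_update (x : Fin d → ℤ) (i : Fin d) (a b : ℤ) (h : |a - b| = 1) :
    Adj (Function.update x i a) (Function.update x i b) := by
  unfold Adj norm1
  have h1 : ∀ j, |(Function.update x i a - Function.update x i b) j|
      = if j = i then |a - b| else 0 := by
    intro j
    by_cases hj : j = i
    · subst hj; simp [Function.update]
    · simp [Function.update, hj]
  rw [Finset.sum_congr rfl (fun j _ => h1 j), Finset.sum_ite_eq' Finset.univ i,
    if_pos (Finset.mem_univ i), h]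

/-- Sweep coordinate `i` of `x` from `x i` toward `b`, excluding the final point. -/
def seg (x : Fin d → ℤ) (i : Fin d) (b : ℤ) : List (Fin d → ℤ) :=
  (List.range (b - x i).natAbs).map
    (fun k : ℕ => Function.update x i (x i + (if x i ≤ b then (k : ℤ) else -(k : ℤ))))

lemma mem_seg {x : Fin d → ℤ} {i : Fin d} {b : ℤ} {z : Fin d → ℤ} (hz : z ∈ seg x i b) :
    ∃ t, btwn (x i) b t ∧ t ≠ b ∧ z = Function.update x i t := by
  rw [seg] at hz
  obtain ⟨k, hk, rfl⟩ := List.mem_map.1 hz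
  rw [List.mem_range] at hk
  refine ⟨x i + (if x i ≤ b then (k : ℤ) else -(k : ℤ)), ?_, ?_, rfl⟩
  · unfold btwn; split_ifs with hle <;> omega
  · split_ifs with hle <;> omega

lemma seg_nodup (x : Fin d → ℤ) (i : Fin d) (b : ℤ) : (seg x i b).Nodup := by
  rw [seg]
  refine List.Nodup.map ?_ List.nodup_range
  intro k₁ k₂ hkk
  have := congrFun hkk i
  simp only [Function.update_self] at this
  split_ifs at this <;> omega

lemma abs_eq_one_of {a b : ℤ} (h : a - b = 1 ∨ a - b = -1) : |a - b| = 1 := by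
  rcases h with h | h <;> rw [h] <;> norm_num

lemma chain'_seg (x : Fin d → ℤ) (i : Fin d) (b : ℤ) : (seg x i b).Chain' Adj := by
  rw [seg, List.Chain', List.isChain_map]
  cases hn : (b - x i).natAbs with
  | zero => simp
  | succ n =>
    rw [List.isChain_range_succ]
    intro m _
    apply adj_update
    apply abs_eq_one_of
    split_ifs <;> push_cast <;> [right; left] <;> ring

lemma seg_getLast? (x : Fin d → ℤ) (i : Fin d) (b : ℤ) {n : ℕ}
    (hn : (b - x i).natAbs = n + 1) :
    (seg x i b).getLast? =
      some (Function.update x i (x i + (if x i ≤ b then (n : ℤ) else -(n : ℤ)))) := by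
  rw [seg, hn, List.getLast?_map, List.getLast?_eq_getElem?, List.length_range,
    List.getElem?_range (by omega : n + 1 - 1 < n + 1)]
  rfl

lemma chain'_seg_append {L : List (Fin d → ℤ)} (x : Fin d → ℤ) (i : Fin d) (b : ℤ)
    (hc : L.Chain' Adj) (hh : L.head? = some (Function.update x i b)) :
    (seg x i b ++ L).Chain' Adj := by
  rw [List.Chain', List.isChain_append]
  refine ⟨chain'_seg x i b, hc, ?_⟩
  intro p hp q hq
  cases hn : (b - x i).natAbs with
  | zero => rw [seg, hn] at hp; simp at hp
  | succ n =>
    rw [seg_getLast? x i b hn] at hp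
    rw [hh] at hq
    simp only [Option.mem_def, Option.some.injEq] at hp hq
    subst hp; subst hq
    have hb : b = Function.update x i b i := by simp
    rw [hb]
    have : Function.update x i b = Function.update x i (Function.update x i b i) := by simp
    rw [← this]
    apply adj_update
    apply abs_eq_one_of
    split_ifs <;> omega

lemma head?_seg_append {L : List (Fin d → ℤ)} (x : Fin d → ℤ) (i : Fin d) (b : ℤ)
    (hh : L.head? = some (Function.update x i b)) :
    (seg x i b ++ L).head? = some x := by
  cases hn : (b - x i).natAbs with
  | zero =>
    have hb : b = x i := by omega
    rw [seg, hn]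
    simpa [hb] using hh
  | succ n =>
    rw [seg, hn, List.range_succ_eq_map]
    simp

lemma seg_ne_or (x : Fin d → ℤ) (i : Fin d) (b : ℤ) (L : List (Fin d → ℤ)) (hL : L ≠ []) :
    seg x i b ++ L ≠ [] := by
  simp [hL]

/-- Zero out the coordinates `k, k+1, …, d-1` of `x`, one at a time. -/
def ztail (x : Fin d → ℤ) (k : ℕ) : List (Fin d → ℤ) :=
  if h : k < d then seg x ⟨k, h⟩ 0 ++ ztail (Function.update x ⟨k, h⟩ 0) (k + 1) else [x]
termination_by d - k

lemma ztail_ne (x : Fin d → ℤ) (k : ℕ) : ztail x k ≠ [] := by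
  have H : ∀ (n : ℕ) (x : Fin d → ℤ) (k : ℕ), d - k = n → ztail x k ≠ [] := by
    intro n
    induction n with
    | zero => intro x k hn; rw [ztail, dif_neg (by omega)]; simp
    | succ n ih =>
      intro x k hn
      rw [ztail, dif_pos (by omega : k < d)]
      exact seg_ne_or _ _ _ _ (ih _ _ (by omega))
  exact H (d - k) x k rfl

lemma mem_ztail {x : Fin d → ℤ} {k : ℕ} {z : Fin d → ℤ} (hz : z ∈ ztail x k) :
    (∀ j : Fin d, (j : ℕ) < k → z j = x j) ∧
    ∃ m, k ≤ m ∧ (∀ j : Fin d, k ≤ (j : ℕ) → (j : ℕ) < m → z j = 0) ∧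
      (∀ j : Fin d, (j : ℕ) = m → btwn (x j) 0 (z j)) ∧
      (∀ j : Fin d, m < (j : ℕ) → z j = x j) := by
  have H : ∀ (n : ℕ) (x : Fin d → ℤ) (k : ℕ), d - k = n → ∀ z ∈ ztail x k,
      (∀ j : Fin d, (j : ℕ) < k → z j = x j) ∧
      ∃ m, k ≤ m ∧ (∀ j : Fin d, k ≤ (j : ℕ) → (j : ℕ) < m → z j = 0) ∧
        (∀ j : Fin d, (j : ℕ) = m → btwn (x j) 0 (z j)) ∧
        (∀ j : Fin d, m < (j : ℕ) → z j = x j) := by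
    intro n
    induction n with
    | zero =>
      intro x k hn z hz
      rw [ztail, dif_neg (by omega)] at hz
      rcases List.mem_singleton.1 hz with rfl
      refine ⟨fun j _ => rfl, k, le_refl k, fun j h1 h2 => by omega,
        fun j _ => by unfold btwn; omega, fun j _ => rfl⟩
    | succ n ih =>
      intro x k hn z hz
      have hk : k < d := by omega
      rw [ztail, dif_pos hk] at hz
      rcases List.mem_append.1 hz with hz | hz
      · obtain ⟨t, hb, hne, rfl⟩ := mem_seg hz
        refine ⟨fun j hj => ?_, k, le_refl k, fun j h1 h2 => by omega, fun j hj => ?_,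
          fun j hj => ?_⟩
        · rw [Function.update_apply, if_neg (by simp [Fin.ext_iff]; omega)]
        · have hje : j = ⟨k, hk⟩ := by simp [Fin.ext_iff]; omega
          subst hje; simpa using hb
        · rw [Function.update_apply, if_neg (by simp [Fin.ext_iff]; omega)]
      · obtain ⟨h1, m, hm, h2, h3, h4⟩ := ih _ _ (by omega) z hz
        refine ⟨fun j hj => ?_, m, by omega, fun j hj1 hj2 => ?_, fun j hj => ?_, fun j hj => ?_⟩
        · rw [h1 j (by omega), Function.update_apply, if_neg (by simp [Fin.ext_iff]; omega)]
        · rcases Nat.eq_or_lt_of_le hj1 with he | hl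
          · have hje : j = ⟨k, hk⟩ := by simp [Fin.ext_iff]; omega
            rw [h1 j (by omega), hje]; simp
          · exact h2 j (by omega) hj2
        · have h5 := h3 j hj
          rwa [Function.update_apply, if_neg (by simp [Fin.ext_iff]; omega)] at h5
        · rw [h4 j hj, Function.update_apply, if_neg (by simp [Fin.ext_iff]; omega)]
  exact H (d - k) x k rfl z hz

lemma ztail_chain'_head (x : Fin d → ℤ) (k : ℕ) :
    (ztail x k).Chain' Adj ∧ (ztail x k).head? = some x := by
  have H : ∀ (n : ℕ) (x : Fin d → ℤ) (k : ℕ), d - k = n →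
      (ztail x k).Chain' Adj ∧ (ztail x k).head? = some x := by
    intro n
    induction n with
    | zero => intro x k hn; rw [ztail, dif_neg (by omega)]; simp [List.Chain']
    | succ n ih =>
      intro x k hn
      rw [ztail, dif_pos (by omega : k < d)]
      obtain ⟨hc, hh⟩ := ih (Function.update x ⟨k, by omega⟩ 0) (k + 1) (by omega)
      exact ⟨chain'_seg_append _ _ _ hc hh, head?_seg_append _ _ _ hh⟩
  exact H (d - k) x k rfl

lemma ztail_getLast? (x : Fin d → ℤ) (k : ℕ) :
    (ztail x k).getLast? = some (fun j : Fin d => if (j : ℕ) < k then x j else 0) := by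
  have H : ∀ (n : ℕ) (x : Fin d → ℤ) (k : ℕ), d - k = n →
      (ztail x k).getLast? = some (fun j : Fin d => if (j : ℕ) < k then x j else 0) := by
    intro n
    induction n with
    | zero =>
      intro x k hn
      rw [ztail, dif_neg (by omega)]
      simp only [List.getLast?_singleton, Option.some.injEq]
      funext j
      rw [if_pos (by omega)]
    | succ n ih =>
      intro x k hn
      have hk : k < d := by omega
      rw [ztail, dif_pos hk, List.getLast?_append, ih _ _ (by omega)]
      simp only [Option.some_or, Option.some.injEq]
      funext j
      rw [Function.update_apply]
      by_cases h1 : (j : ℕ) < k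
      · rw [if_pos (by omega), if_neg (by simp [Fin.ext_iff]; omega), if_pos h1]
      · by_cases h2 : (j : ℕ) = k
        · rw [if_pos (by omega), if_pos (by simp [Fin.ext_iff]; omega), if_neg h1]
        · rw [if_neg (by omega), if_neg h1]
  exact H (d - k) x k rfl

lemma ztail_nodup (x : Fin d → ℤ) (k : ℕ) : (ztail x k).Nodup := by
  have H : ∀ (n : ℕ) (x : Fin d → ℤ) (k : ℕ), d - k = n → (ztail x k).Nodup := by
    intro n
    induction n with
    | zero => intro x k hn; rw [ztail, dif_neg (by omega)]; simp
    | succ n ih =>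
      intro x k hn
      have hk : k < d := by omega
      rw [ztail, dif_pos hk, List.nodup_append]
      refine ⟨seg_nodup _ _ _, ih _ _ (by omega), ?_⟩
      rintro z hz1 _ hz2 rfl
      obtain ⟨t, hb, hne, rfl⟩ := mem_seg hz1
      obtain ⟨h1, _⟩ := mem_ztail hz2
      have h5 := h1 ⟨k, hk⟩ (by simp)
      simp at h5
      exact hne h5
  exact H (d - k) x k rfl

/-! ### The two canonical paths -/

def sg (t : ℤ) : ℤ := if 0 ≤ t then 1 else -1

variable {r : ℤ}

lemma h01 : (0 : Fin (d + 2)) ≠ 1 := Fin.ne_of_val_ne (by simp)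

lemma fin_two_le (j : Fin (d + 2)) (h0 : j ≠ 0) (h1 : j ≠ 1) : 2 ≤ (j : ℕ) := by
  have e0 : (j : ℕ) ≠ 0 := fun h => h0 (Fin.ext (by simpa using h))
  have e1 : (j : ℕ) ≠ 1 := fun h => h1 (Fin.ext (by simpa using h))
  omega

/-- Does the `E`-path need a preliminary side move? -/
def adjE (r : ℤ) (x : Fin (d + 2) → ℤ) : Prop := x 0 = -r ∧ ∀ j, j ≠ 0 → |x j| < r
def adjF (r : ℤ) (x : Fin (d + 2) → ℤ) : Prop := x 0 = r ∧ ∀ j, j ≠ 0 → |x j| < r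

instance : DecidablePred (adjE r (d := d)) := fun x => by unfold adjE; infer_instance
instance : DecidablePred (adjF r (d := d)) := fun x => by unfold adjF; infer_instance

def aimE (r : ℤ) (x : Fin (d + 2) → ℤ) : ℤ := if adjE r x then sg (x 1) * r else x 1
def aimF (r : ℤ) (x : Fin (d + 2) → ℤ) : ℤ := if adjF r x then sg (x 1) * r else x 1

lemma aimE_cases (r : ℤ) (x : Fin (d + 2) → ℤ) :
    (aimE r x = r ∧ 0 ≤ x 1) ∨ (aimE r x = -r ∧ x 1 < 0) ∨ aimE r x = x 1 := by
  unfold aimE sg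
  split_ifs with h1 h2 <;> [left; right; skip] <;> simp_all <;> omega

lemma aimF_cases (r : ℤ) (x : Fin (d + 2) → ℤ) :
    (aimF r x = r ∧ 0 ≤ x 1) ∨ (aimF r x = -r ∧ x 1 < 0) ∨ aimF r x = x 1 := by
  unfold aimF sg
  split_ifs with h1 h2 <;> [left; right; skip] <;> simp_all <;> omega

lemma aimE_of_ne (h : x 0 ≠ -r) : aimE r x = x 1 := by
  unfold aimE; rw [if_neg]; intro ⟨h1, _⟩; exact h h1

lemma aimF_of_ne (h : x 0 ≠ r) : aimF r x = x 1 := by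
  unfold aimF; rw [if_neg]; intro ⟨h1, _⟩; exact h h1

def pE1 (r : ℤ) (x : Fin (d + 2) → ℤ) : Fin (d + 2) → ℤ := Function.update x 1 (aimE r x)
def pE2 (r : ℤ) (x : Fin (d + 2) → ℤ) : Fin (d + 2) → ℤ := Function.update (pE1 r x) 0 r
def pE3 (r : ℤ) (x : Fin (d + 2) → ℤ) : Fin (d + 2) → ℤ := Function.update (pE2 r x) 1 0
def pF1 (r : ℤ) (x : Fin (d + 2) → ℤ) : Fin (d + 2) → ℤ := Function.update x 1 (aimF r x)
def pF2 (r : ℤ) (x : Fin (d + 2) → ℤ) : Fin (d + 2) → ℤ := Function.update (pF1 r x) 0 (-r)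
def pF3 (r : ℤ) (x : Fin (d + 2) → ℤ) : Fin (d + 2) → ℤ := Function.update (pF2 r x) 1 0

lemma pE1_apply (j : Fin (d + 2)) : pE1 r x j = if j = 1 then aimE r x else x j := by
  simp [pE1, Function.update_apply]
lemma pE2_apply (j : Fin (d + 2)) :
    pE2 r x j = if j = 0 then r else if j = 1 then aimE r x else x j := by
  rcases eq_or_ne j 0 with rfl | hj0
  · rw [if_pos rfl, pE2, Function.update_self]
  · rw [if_neg hj0, pE2, Function.update_apply, if_neg hj0, pE1_apply]
lemma pE3_apply (j : Fin (d + 2)) :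
    pE3 r x j = if j = 0 then r else if j = 1 then 0 else x j := by
  rcases eq_or_ne j 1 with rfl | hj1
  · rw [pE3, Function.update_self, if_neg (fun h => h01 (d := d) h.symm), if_pos rfl]
  · rw [pE3, Function.update_apply, if_neg hj1, pE2_apply]
    simp [hj1]
lemma pF1_apply (j : Fin (d + 2)) : pF1 r x j = if j = 1 then aimF r x else x j := by
  simp [pF1, Function.update_apply]
lemma pF2_apply (j : Fin (d + 2)) :
    pF2 r x j = if j = 0 then -r else if j = 1 then aimF r x else x j := by
  rcases eq_or_ne j 0 with rfl | hj0
  · rw [if_pos rfl, pF2, Function.update_self]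
  · rw [if_neg hj0, pF2, Function.update_apply, if_neg hj0, pF1_apply]
lemma pF3_apply (j : Fin (d + 2)) :
    pF3 r x j = if j = 0 then -r else if j = 1 then 0 else x j := by
  rcases eq_or_ne j 1 with rfl | hj1
  · rw [pF3, Function.update_self, if_neg (fun h => h01 (d := d) h.symm), if_pos rfl]
  · rw [pF3, Function.update_apply, if_neg hj1, pF2_apply]
    simp [hj1]

/-- The canonical path from `x` to `e_r`. -/
def pathE (r : ℤ) (x : Fin (d + 2) → ℤ) : List (Fin (d + 2) → ℤ) :=
  seg x 1 (aimE r x) ++ (seg (pE1 r x) 0 r ++ (seg (pE2 r x) 1 0 ++ ztail (pE3 r x) 2))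

/-- The canonical path from `x` to `-e_r`. -/
def pathF (r : ℤ) (x : Fin (d + 2) → ℤ) : List (Fin (d + 2) → ℤ) :=
  seg x 1 (aimF r x) ++ (seg (pF1 r x) 0 (-r) ++ (seg (pF2 r x) 1 0 ++ ztail (pF3 r x) 2))

/-! ### Classification of the vertices of the two paths -/

/-- partially-zeroed tail relation -/
def PZ (u z : Fin (d + 2) → ℤ) : Prop :=
  ∃ m, 2 ≤ m ∧ (∀ j : Fin (d + 2), 2 ≤ (j : ℕ) → (j : ℕ) < m → z j = 0) ∧
    (∀ j : Fin (d + 2), (j : ℕ) = m → btwn (u j) 0 (z j)) ∧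
    (∀ j : Fin (d + 2), m < (j : ℕ) → z j = u j)

def BotE (r : ℤ) (u z : Fin (d + 2) → ℤ) : Prop :=
  u 0 = -r ∧ ∃ s, btwn (u 1) (aimE r u) s ∧ z = Function.update u 1 s
def MidE (r : ℤ) (u z : Fin (d + 2) → ℤ) : Prop :=
  ∃ t, -r < t ∧ t < r ∧ btwn (u 0) r t ∧ z = Function.update (pE1 r u) 0 t
def TopE (r : ℤ) (u z : Fin (d + 2) → ℤ) : Prop :=
  z 0 = r ∧ ((∃ s, btwn (aimE r u) 0 s ∧ s ≠ 0 ∧ z = Function.update (pE2 r u) 1 s) ∨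
    (z 1 = 0 ∧ PZ u z))

def TopF (r : ℤ) (v z : Fin (d + 2) → ℤ) : Prop :=
  v 0 = r ∧ ∃ s, btwn (v 1) (aimF r v) s ∧ z = Function.update v 1 s
def MidF (r : ℤ) (v z : Fin (d + 2) → ℤ) : Prop :=
  ∃ t, -r < t ∧ t < r ∧ btwn (v 0) (-r) t ∧ z = Function.update (pF1 r v) 0 t
def BotF (r : ℤ) (v z : Fin (d + 2) → ℤ) : Prop :=
  z 0 = -r ∧ ((∃ s, btwn (aimF r v) 0 s ∧ s ≠ 0 ∧ z = Function.update (pF2 r v) 1 s) ∨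
    (z 1 = 0 ∧ PZ v z))

lemma memE {u z : Fin (d + 2) → ℤ} (hr : 1 ≤ r) (hu : ∀ i, |u i| ≤ r)
    (hz : z ∈ pathE r u) : BotE r u z ∨ MidE r u z ∨ TopE r u z := by
  rcases List.mem_append.1 hz with h | h
  · -- first side-segment
    obtain ⟨s, hb, hne, rfl⟩ := mem_seg h
    left
    have hadj : adjE r u := by
      by_contra hA
      have : aimE r u = u 1 := if_neg hA
      rw [this] at hb
      unfold btwn at hb; exact hne (by omega)
    exact ⟨hadj.1, s, hb, rfl⟩
  rcases List.mem_append.1 h with h | h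
  · -- main sweep
    obtain ⟨t, hb, hne, rfl⟩ := mem_seg h
    have hp0 : pE1 r u 0 = u 0 := by rw [pE1_apply, if_neg h01]
    rw [hp0] at hb
    have hb0 : -r ≤ u 0 ∧ u 0 ≤ r := by have := hu 0; rwa [abs_le] at this
    rcases eq_or_lt_of_le (show -r ≤ t by unfold btwn at hb; omega) with he | hlt
    · -- t = -r : this is the point pE1 itself, put it in BotE
      left
      have ht : t = -r := he.symm
      have hu0 : u 0 = -r := by unfold btwn at hb; omega
      have heq : Function.update (pE1 r u) 0 t = Function.update u 1 (aimE r u) := by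
        rw [show t = pE1 r u 0 from by rw [hp0]; omega, Function.update_eq_self]
        rfl
      exact ⟨hu0, aimE r u, by unfold btwn; omega, heq⟩
    · right; left
      exact ⟨t, hlt, by unfold btwn at hb; omega, hb, rfl⟩
  rcases List.mem_append.1 h with h | h
  · -- top side-sweep
    obtain ⟨s, hb, hne, rfl⟩ := mem_seg h
    right; right
    have h20 : pE2 r u 1 = aimE r u := by rw [pE2_apply, if_neg h01.symm, if_pos rfl]
    rw [h20] at hb
    refine ⟨?_, Or.inl ⟨s, hb, hne, rfl⟩⟩
    rw [Function.update_apply, if_neg h01, pE2_apply, if_pos rfl]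
  · -- tail zeroing
    have h1 := (mem_ztail h).1
    obtain ⟨m, hm2, hz1, hz2, hz3⟩ := (mem_ztail h).2
    right; right
    have e0 : z 0 = r := by
      rw [h1 0 (by simp), pE3_apply, if_pos rfl]
    have e1 : z 1 = 0 := by
      rw [h1 1 (by simp), pE3_apply, if_neg h01.symm, if_pos rfl]
    refine ⟨e0, Or.inr ⟨e1, m, hm2, fun j hj2 hjm => hz1 j (by omega) (by omega),
      fun j hjm => ?_, fun j hjm => ?_⟩⟩
    · have h5 := hz2 j hjm
      rwa [pE3_apply, if_neg, if_neg] at h5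
      · exact fun h' => by rw [h'] at hjm; simp at hjm; try omega
      · exact fun h' => by rw [h'] at hjm; simp at hjm; try omega
    · have h5 := hz3 j hjm
      rwa [pE3_apply, if_neg, if_neg] at h5
      · exact fun h' => by rw [h'] at hjm; simp at hjm; try omega
      · exact fun h' => by rw [h'] at hjm; simp at hjm; try omega

lemma memF {v z : Fin (d + 2) → ℤ} (hr : 1 ≤ r) (hv : ∀ i, |v i| ≤ r)
    (hz : z ∈ pathF r v) : TopF r v z ∨ MidF r v z ∨ BotF r v z := by
  rcases List.mem_append.1 hz with h | h
  · obtain ⟨s, hb, hne, rfl⟩ := mem_seg h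
    left
    have hadj : adjF r v := by
      by_contra hA
      have : aimF r v = v 1 := if_neg hA
      rw [this] at hb
      unfold btwn at hb; exact hne (by omega)
    exact ⟨hadj.1, s, hb, rfl⟩
  rcases List.mem_append.1 h with h | h
  · obtain ⟨t, hb, hne, rfl⟩ := mem_seg h
    have hp0 : pF1 r v 0 = v 0 := by rw [pF1_apply, if_neg h01]
    rw [hp0] at hb
    have hb0 : -r ≤ v 0 ∧ v 0 ≤ r := by have := hv 0; rwa [abs_le] at this
    rcases eq_or_lt_of_le (show t ≤ r by unfold btwn at hb; omega) with he | hlt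
    · -- t = r : this is the point pF1 itself, put it in TopF
      left
      have hv0 : v 0 = r := by unfold btwn at hb; omega
      have heq : Function.update (pF1 r v) 0 t = Function.update v 1 (aimF r v) := by
        rw [show t = pF1 r v 0 from by rw [hp0]; omega, Function.update_eq_self]
        rfl
      exact ⟨hv0, aimF r v, by unfold btwn; omega, heq⟩
    · right; left
      exact ⟨t, by unfold btwn at hb; omega, hlt, hb, rfl⟩
  rcases List.mem_append.1 h with h | h
  · obtain ⟨s, hb, hne, rfl⟩ := mem_seg h
    right; right
    have h20 : pF2 r v 1 = aimF r v := by rw [pF2_apply, if_neg h01.symm, if_pos rfl]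
    rw [h20] at hb
    refine ⟨?_, Or.inl ⟨s, hb, hne, rfl⟩⟩
    rw [Function.update_apply, if_neg h01, pF2_apply, if_pos rfl]
  · have h1 := (mem_ztail h).1
    obtain ⟨m, hm2, hz1, hz2, hz3⟩ := (mem_ztail h).2
    right; right
    have e0 : z 0 = -r := by
      rw [h1 0 (by simp), pF3_apply, if_pos rfl]
    have e1 : z 1 = 0 := by
      rw [h1 1 (by simp), pF3_apply, if_neg h01.symm, if_pos rfl]
    refine ⟨e0, Or.inr ⟨e1, m, hm2, fun j hj2 hjm => hz1 j (by omega) (by omega),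
      fun j hjm => ?_, fun j hjm => ?_⟩⟩
    · have h5 := hz2 j hjm
      rwa [pF3_apply, if_neg, if_neg] at h5
      · exact fun h' => by rw [h'] at hjm; simp at hjm; try omega
      · exact fun h' => by rw [h'] at hjm; simp at hjm; try omega
    · have h5 := hz3 j hjm
      rwa [pF3_apply, if_neg, if_neg] at h5
      · exact fun h' => by rw [h'] at hjm; simp at hjm; try omega
      · exact fun h' => by rw [h'] at hjm; simp at hjm; try omega

lemma abs_eq_r_of {a : ℤ} (hr : 1 ≤ r) (h : a = -r ∨ a = r) : |a| = r := by
  rcases h with h | h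
  · rw [h, abs_neg, abs_of_nonneg (by omega)]
  · rw [h, abs_of_nonneg (by omega)]

lemma aimE_bounds (hr : 1 ≤ r) (hu : ∀ i, |u i| ≤ r) : -r ≤ aimE r u ∧ aimE r u ≤ r := by
  have h1 := hu 1
  rw [abs_le] at h1
  rcases aimE_cases r u with ⟨h, _⟩ | ⟨h, _⟩ | h <;> omega

lemma aimF_bounds (hr : 1 ≤ r) (hu : ∀ i, |u i| ≤ r) : -r ≤ aimF r u ∧ aimF r u ≤ r := by
  have h1 := hu 1
  rw [abs_le] at h1
  rcases aimF_cases r u with ⟨h, _⟩ | ⟨h, _⟩ | h <;> omega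

lemma sphereE {u z : Fin (d + 2) → ℤ} (hr : 1 ≤ r) (hu : u ∈ Sinf (d + 2) r)
    (h : BotE r u z ∨ MidE r u z ∨ TopE r u z) : z ∈ Sinf (d + 2) r := by
  obtain ⟨hub, hus⟩ := hu
  have hbnd : ∀ i, -r ≤ u i ∧ u i ≤ r := fun i => abs_le.1 (hub i)
  have haim := aimE_bounds hr hub
  rcases h with ⟨hu0, s, hb, rfl⟩ | ⟨t, ht1, ht2, hb, rfl⟩ | ⟨hz0, hc⟩
  · -- BotE
    constructor
    · intro i
      rw [Function.update_apply]
      split_ifs with hi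
      · rw [abs_le]; unfold btwn at hb; have := hbnd 1; omega
      · exact hub i
    · refine ⟨0, ?_⟩
      rw [Function.update_apply, if_neg h01, hu0]
      exact abs_eq_r_of hr (Or.inl rfl)
  · -- MidE
    constructor
    · intro i
      rw [Function.update_apply]
      split_ifs with hi
      · rw [abs_le]; omega
      · rw [pE1_apply]
        split_ifs with hi1
        · rw [abs_le]; omega
        · exact hub i
    · by_cases hA : adjE r u
      · refine ⟨1, ?_⟩
        rw [Function.update_apply, if_neg h01.symm, pE1_apply, if_pos rfl]
        unfold aimE sg
        rw [if_pos hA]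
        split_ifs
        · exact abs_eq_r_of hr (Or.inr (by ring))
        · exact abs_eq_r_of hr (Or.inl (by ring))
      · have key : (∃ j, j ≠ 0 ∧ |u j| = r) ∨ u 0 = r := by
          obtain ⟨j, hj⟩ := hus
          by_cases hj0 : j = 0
          · subst hj0
            have h2 : u 0 = -r ∨ u 0 = r := by
              have := hbnd 0
              rcases (abs_eq (by omega : (0:ℤ) ≤ r)).1 hj with h' | h' <;> omega
            rcases h2 with h2 | h2
            · left
              unfold adjE at hA
              push_neg at hA
              obtain ⟨i, hi0, hir⟩ := hA h2
              exact ⟨i, hi0, le_antisymm (hub i) hir⟩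
            · right; exact h2
          · exact Or.inl ⟨j, hj0, hj⟩
        rcases key with ⟨j, hj0, hjr⟩ | hu0
        · refine ⟨j, ?_⟩
          rw [Function.update_apply, if_neg hj0, pE1_apply]
          split_ifs with hj1
          · rw [show aimE r u = u 1 from if_neg hA, ← hj1]; exact hjr
          · exact hjr
        · exfalso; unfold btwn at hb; omega
  · -- TopE
    refine ⟨fun i => ?_, 0, by rw [hz0]; exact abs_eq_r_of hr (Or.inr rfl)⟩
    rcases hc with ⟨s, hb, hs0, rfl⟩ | ⟨hz1, m, hm2, hp1, hp2, hp3⟩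
    · rw [Function.update_apply]
      split_ifs with hi
      · rw [abs_le]; unfold btwn at hb; omega
      · rw [pE2_apply]
        split_ifs with h0'
        · rw [abs_of_nonneg (by omega)]
        · exact hub i
    · by_cases hi0 : i = 0
      · subst hi0; rw [hz0, abs_of_nonneg (by omega)]
      · by_cases hi1 : i = 1
        · subst hi1; rw [hz1, abs_zero]; omega
        · have hi2 : 2 ≤ (i : ℕ) := fin_two_le i hi0 hi1
          rcases lt_trichotomy ((i : ℕ)) m with hlt | heq | hgt
          · rw [hp1 i hi2 hlt, abs_zero]; omega
          · have hbt := hp2 i heq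
            unfold btwn at hbt
            rw [abs_le]; have := hbnd i; omega
          · rw [hp3 i hgt]; exact hub i

lemma sphereF {v z : Fin (d + 2) → ℤ} (hr : 1 ≤ r) (hv : v ∈ Sinf (d + 2) r)
    (h : TopF r v z ∨ MidF r v z ∨ BotF r v z) : z ∈ Sinf (d + 2) r := by
  obtain ⟨hub, hus⟩ := hv
  have hbnd : ∀ i, -r ≤ v i ∧ v i ≤ r := fun i => abs_le.1 (hub i)
  have haim := aimF_bounds hr hub
  rcases h with ⟨hv0, s, hb, rfl⟩ | ⟨t, ht1, ht2, hb, rfl⟩ | ⟨hz0, hc⟩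
  · constructor
    · intro i
      rw [Function.update_apply]
      split_ifs with hi
      · rw [abs_le]; unfold btwn at hb; have := hbnd 1; omega
      · exact hub i
    · refine ⟨0, ?_⟩
      rw [Function.update_apply, if_neg h01, hv0]
      exact abs_eq_r_of hr (Or.inr rfl)
  · constructor
    · intro i
      rw [Function.update_apply]
      split_ifs with hi
      · rw [abs_le]; omega
      · rw [pF1_apply]
        split_ifs with hi1
        · rw [abs_le]; omega
        · exact hub i
    · by_cases hA : adjF r v
      · refine ⟨1, ?_⟩
        rw [Function.update_apply, if_neg h01.symm, pF1_apply, if_pos rfl]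
        unfold aimF sg
        rw [if_pos hA]
        split_ifs
        · exact abs_eq_r_of hr (Or.inr (by ring))
        · exact abs_eq_r_of hr (Or.inl (by ring))
      · have key : (∃ j, j ≠ 0 ∧ |v j| = r) ∨ v 0 = -r := by
          obtain ⟨j, hj⟩ := hus
          by_cases hj0 : j = 0
          · subst hj0
            have h2 : v 0 = -r ∨ v 0 = r := by
              have := hbnd 0
              rcases (abs_eq (by omega : (0:ℤ) ≤ r)).1 hj with h' | h' <;> omega
            rcases h2 with h2 | h2
            · right; exact h2
            · left
              unfold adjF at hA
              push_neg at hA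
              obtain ⟨i, hi0, hir⟩ := hA h2
              exact ⟨i, hi0, le_antisymm (hub i) hir⟩
          · exact Or.inl ⟨j, hj0, hj⟩
        rcases key with ⟨j, hj0, hjr⟩ | hv0
        · refine ⟨j, ?_⟩
          rw [Function.update_apply, if_neg hj0, pF1_apply]
          split_ifs with hj1
          · rw [show aimF r v = v 1 from if_neg hA, ← hj1]; exact hjr
          · exact hjr
        · exfalso; unfold btwn at hb; omega
  · refine ⟨fun i => ?_, 0, by rw [hz0]; exact abs_eq_r_of hr (Or.inl rfl)⟩
    rcases hc with ⟨s, hb, hs0, rfl⟩ | ⟨hz1, m, hm2, hp1, hp2, hp3⟩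
    · rw [Function.update_apply]
      split_ifs with hi
      · rw [abs_le]; unfold btwn at hb; omega
      · rw [pF2_apply]
        split_ifs with h0'
        · rw [abs_neg, abs_of_nonneg (by omega)]
        · exact hub i
    · by_cases hi0 : i = 0
      · subst hi0; rw [hz0, abs_neg, abs_of_nonneg (by omega)]
      · by_cases hi1 : i = 1
        · subst hi1; rw [hz1, abs_zero]; omega
        · have hi2 : 2 ≤ (i : ℕ) := fin_two_le i hi0 hi1
          rcases lt_trichotomy ((i : ℕ)) m with hlt | heq | hgt
          · rw [hp1 i hi2 hlt, abs_zero]; omega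
          · have hbt := hp2 i heq
            unfold btwn at hbt
            rw [abs_le]; have := hbnd i; omega
          · rw [hp3 i hgt]; exact hub i

/-! ### The canonical paths are paths -/

lemma pathE_ne (r : ℤ) (u : Fin (d + 2) → ℤ) : pathE r u ≠ [] :=
  seg_ne_or _ _ _ _ (seg_ne_or _ _ _ _ (seg_ne_or _ _ _ _ (ztail_ne _ _)))

lemma pathF_ne (r : ℤ) (u : Fin (d + 2) → ℤ) : pathF r u ≠ [] :=
  seg_ne_or _ _ _ _ (seg_ne_or _ _ _ _ (seg_ne_or _ _ _ _ (ztail_ne _ _)))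

lemma pathE_chain_head (r : ℤ) (u : Fin (d + 2) → ℤ) :
    (pathE r u).Chain' Adj ∧ (pathE r u).head? = some u := by
  obtain ⟨zc, zh⟩ := ztail_chain'_head (pE3 r u) 2
  have c3 := chain'_seg_append (pE2 r u) 1 0 zc zh
  have h3 := head?_seg_append (pE2 r u) 1 0 zh
  have c2 := chain'_seg_append (pE1 r u) 0 r c3 h3
  have h2 := head?_seg_append (pE1 r u) 0 r h3
  have c1 := chain'_seg_append u 1 (aimE r u) c2 h2
  have h1 := head?_seg_append u 1 (aimE r u) h2
  exact ⟨c1, h1⟩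

lemma pathF_chain_head (r : ℤ) (u : Fin (d + 2) → ℤ) :
    (pathF r u).Chain' Adj ∧ (pathF r u).head? = some u := by
  obtain ⟨zc, zh⟩ := ztail_chain'_head (pF3 r u) 2
  have c3 := chain'_seg_append (pF2 r u) 1 0 zc zh
  have h3 := head?_seg_append (pF2 r u) 1 0 zh
  have c2 := chain'_seg_append (pF1 r u) 0 (-r) c3 h3
  have h2 := head?_seg_append (pF1 r u) 0 (-r) h3
  have c1 := chain'_seg_append u 1 (aimF r u) c2 h2
  have h1 := head?_seg_append u 1 (aimF r u) h2
  exact ⟨c1, h1⟩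

lemma pathE_getLast? (r : ℤ) (u : Fin (d + 2) → ℤ) :
    (pathE r u).getLast? = some (eVec (d + 2) r) := by
  unfold pathE
  rw [List.getLast?_append, List.getLast?_append, List.getLast?_append, ztail_getLast?]
  show some _ = _
  congr 1
  funext j
  rcases eq_or_ne j 0 with rfl | hj0
  · rw [if_pos (by simp), pE3_apply, if_pos rfl]; simp [eVec]
  · have hv0 : (j : ℕ) ≠ 0 := fun h => hj0 (Fin.ext (by simpa using h))
    rcases eq_or_ne j 1 with rfl | hj1
    · rw [if_pos (by simp), pE3_apply, if_neg h01.symm, if_pos rfl]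
      simp [eVec]
    · have hv1 : (j : ℕ) ≠ 1 := fun h => hj1 (Fin.ext (by simpa using h))
      rw [if_neg (by omega)]
      simp [eVec, hv0]

lemma pathF_getLast? (r : ℤ) (u : Fin (d + 2) → ℤ) :
    (pathF r u).getLast? = some (eVec (d + 2) (-r)) := by
  unfold pathF
  rw [List.getLast?_append, List.getLast?_append, List.getLast?_append, ztail_getLast?]
  show some _ = _
  congr 1
  funext j
  rcases eq_or_ne j 0 with rfl | hj0
  · rw [if_pos (by simp), pF3_apply, if_pos rfl]; simp [eVec]
  · have hv0 : (j : ℕ) ≠ 0 := fun h => hj0 (Fin.ext (by simpa using h))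
    rcases eq_or_ne j 1 with rfl | hj1
    · rw [if_pos (by simp), pF3_apply, if_neg h01.symm, if_pos rfl]
      simp [eVec]
    · have hv1 : (j : ℕ) ≠ 1 := fun h => hj1 (Fin.ext (by simpa using h))
      rw [if_neg (by omega)]
      simp [eVec, hv0]

lemma pathE_nodup (hr : 1 ≤ r) (u : Fin (d + 2) → ℤ) : (pathE r u).Nodup := by
  unfold pathE
  rw [List.nodup_append, List.nodup_append, List.nodup_append]
  refine ⟨seg_nodup _ _ _, ⟨seg_nodup _ _ _, ⟨seg_nodup _ _ _, ztail_nodup _ _, ?_⟩, ?_⟩, ?_⟩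
  · -- s3 vs ztail
    rintro z hz1 _ hz2 rfl
    obtain ⟨s, hb, hsne, rfl⟩ := mem_seg hz1
    have e1 := (mem_ztail hz2).1 1 (by simp)
    rw [Function.update_self, pE3_apply, if_neg h01.symm, if_pos rfl] at e1
    exact hsne e1
  · -- s2 vs (s3 ++ ztail)
    rintro z hz1 _ hz2 rfl
    obtain ⟨t, hb, htne, rfl⟩ := mem_seg hz1
    have e0 : Function.update (pE1 r u) 0 t 0 = t := Function.update_self _ _ _
    rcases List.mem_append.1 hz2 with h | h
    · obtain ⟨s, _, _, heq⟩ := mem_seg h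
      have := congrFun heq 0
      rw [e0, Function.update_apply, if_neg h01, pE2_apply, if_pos rfl] at this
      exact htne this
    · have := (mem_ztail h).1 0 (by simp)
      rw [e0, pE3_apply, if_pos rfl] at this
      exact htne this
  · -- s1 vs rest
    rintro z hz1 _ hz2 rfl
    obtain ⟨s, hb, hsne, rfl⟩ := mem_seg hz1
    have hadj : adjE r u := by
      by_contra hA
      rw [show aimE r u = u 1 from if_neg hA] at hb hsne
      unfold btwn at hb; exact hsne (by omega)
    have hu0 : u 0 = -r := hadj.1
    have e0 : Function.update u 1 s 0 = u 0 := by rw [Function.update_apply, if_neg h01]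
    have e1 : Function.update u 1 s 1 = s := Function.update_self _ _ _
    rcases List.mem_append.1 hz2 with h | h
    · obtain ⟨t, hb', _, heq⟩ := mem_seg h
      have := congrFun heq 1
      rw [e1, Function.update_apply, if_neg h01.symm, pE1_apply, if_pos rfl] at this
      exact hsne this
    rcases List.mem_append.1 h with h | h
    · obtain ⟨s', _, _, heq⟩ := mem_seg h
      have := congrFun heq 0
      rw [e0, Function.update_apply, if_neg h01, pE2_apply, if_pos rfl, hu0] at this
      omega
    · have := (mem_ztail h).1 0 (by simp)
      rw [e0, pE3_apply, if_pos rfl, hu0] at this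
      omega

lemma pathF_nodup (hr : 1 ≤ r) (u : Fin (d + 2) → ℤ) : (pathF r u).Nodup := by
  unfold pathF
  rw [List.nodup_append, List.nodup_append, List.nodup_append]
  refine ⟨seg_nodup _ _ _, ⟨seg_nodup _ _ _, ⟨seg_nodup _ _ _, ztail_nodup _ _, ?_⟩, ?_⟩, ?_⟩
  · rintro z hz1 _ hz2 rfl
    obtain ⟨s, hb, hsne, rfl⟩ := mem_seg hz1
    have e1 := (mem_ztail hz2).1 1 (by simp)
    rw [Function.update_self, pF3_apply, if_neg h01.symm, if_pos rfl] at e1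
    exact hsne e1
  · rintro z hz1 _ hz2 rfl
    obtain ⟨t, hb, htne, rfl⟩ := mem_seg hz1
    have e0 : Function.update (pF1 r u) 0 t 0 = t := Function.update_self _ _ _
    rcases List.mem_append.1 hz2 with h | h
    · obtain ⟨s, _, _, heq⟩ := mem_seg h
      have := congrFun heq 0
      rw [e0, Function.update_apply, if_neg h01, pF2_apply, if_pos rfl] at this
      exact htne this
    · have := (mem_ztail h).1 0 (by simp)
      rw [e0, pF3_apply, if_pos rfl] at this
      exact htne this
  · rintro z hz1 _ hz2 rfl
    obtain ⟨s, hb, hsne, rfl⟩ := mem_seg hz1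
    have hadj : adjF r u := by
      by_contra hA
      rw [show aimF r u = u 1 from if_neg hA] at hb hsne
      unfold btwn at hb; exact hsne (by omega)
    have hu0 : u 0 = r := hadj.1
    have e0 : Function.update u 1 s 0 = u 0 := by rw [Function.update_apply, if_neg h01]
    have e1 : Function.update u 1 s 1 = s := Function.update_self _ _ _
    rcases List.mem_append.1 hz2 with h | h
    · obtain ⟨t, hb', _, heq⟩ := mem_seg h
      have := congrFun heq 1
      rw [e1, Function.update_apply, if_neg h01.symm, pF1_apply, if_pos rfl] at this
      exact hsne this
    rcases List.mem_append.1 h with h | h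
    · obtain ⟨s', _, _, heq⟩ := mem_seg h
      have := congrFun heq 0
      rw [e0, Function.update_apply, if_neg h01, pF2_apply, if_pos rfl, hu0] at this
      omega
    · have := (mem_ztail h).1 0 (by simp)
      rw [e0, pF3_apply, if_pos rfl, hu0] at this
      omega

lemma pathE_isPath (hr : 1 ≤ r) {u : Fin (d + 2) → ℤ} (hu : u ∈ Sinf (d + 2) r) :
    IsPathInFromTo (Sinf (d + 2) r) (pathE r u) u (eVec (d + 2) r) := by
  obtain ⟨hc, hh⟩ := pathE_chain_head r u
  refine ⟨pathE_ne r u, pathE_nodup hr u, hc,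
    fun z hz => sphereE hr hu (memE hr hu.1 hz), ?_, ?_⟩
  · rw [List.head?_eq_head (pathE_ne r u)] at hh
    exact Option.some_inj.1 hh
  · have := pathE_getLast? r u
    rw [List.getLast?_eq_getLast (pathE_ne r u)] at this
    exact Option.some_inj.1 this

lemma pathF_isPath (hr : 1 ≤ r) {u : Fin (d + 2) → ℤ} (hu : u ∈ Sinf (d + 2) r) :
    IsPathInFromTo (Sinf (d + 2) r) (pathF r u) u (eVec (d + 2) (-r)) := by
  obtain ⟨hc, hh⟩ := pathF_chain_head r u
  refine ⟨pathF_ne r u, pathF_nodup hr u, hc,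
    fun z hz => sphereF hr hu (memF hr hu.1 hz), ?_, ?_⟩
  · rw [List.head?_eq_head (pathF_ne r u)] at hh
    exact Option.some_inj.1 hh
  · have := pathF_getLast? r u
    rw [List.getLast?_eq_getLast (pathF_ne r u)] at this
    exact Option.some_inj.1 this

/-! ### Coordinate-zero facts for the classification -/

lemma botE_z0 {u z : Fin (d + 2) → ℤ} (h : BotE r u z) : z 0 = -r := by
  obtain ⟨h0, s, _, rfl⟩ := h
  rw [Function.update_apply, if_neg h01, h0]

lemma midE_z0 {u z : Fin (d + 2) → ℤ} (h : MidE r u z) :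
    -r < z 0 ∧ z 0 < r ∧ u 0 ≤ z 0 := by
  obtain ⟨t, h1, h2, hb, rfl⟩ := h
  rw [Function.update_self]
  unfold btwn at hb
  refine ⟨h1, h2, by omega⟩

lemma topE_z0 {u z : Fin (d + 2) → ℤ} (h : TopE r u z) : z 0 = r := h.1

lemma topF_z0 {v z : Fin (d + 2) → ℤ} (h : TopF r v z) : z 0 = r ∧ v 0 = r := by
  obtain ⟨h0, s, _, rfl⟩ := h
  rw [Function.update_apply, if_neg h01, h0]
  exact ⟨rfl, rfl⟩

lemma midF_z0 {v z : Fin (d + 2) → ℤ} (h : MidF r v z) :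
    -r < z 0 ∧ z 0 < r ∧ z 0 ≤ v 0 := by
  obtain ⟨t, h1, h2, hb, rfl⟩ := h
  rw [Function.update_self]
  unfold btwn at hb
  refine ⟨h1, h2, by omega⟩

lemma botF_z0 {v z : Fin (d + 2) → ℤ} (h : BotF r v z) : z 0 = -r := h.1

lemma classify {u v z : Fin (d + 2) → ℤ} (hr : 1 ≤ r)
    (hE : BotE r u z ∨ MidE r u z ∨ TopE r u z)
    (hF : TopF r v z ∨ MidF r v z ∨ BotF r v z) :
    (BotE r u z ∧ BotF r v z) ∨ (MidE r u z ∧ MidF r v z) ∨ (TopE r u z ∧ TopF r v z) := by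
  rcases hE with hE | hE | hE <;> rcases hF with hF | hF | hF
  · exact absurd (botE_z0 hE) (by have := (topF_z0 hF).1; omega)
  · exact absurd (botE_z0 hE) (by have := (midF_z0 hF).1; omega)
  · exact Or.inl ⟨hE, hF⟩
  · exact absurd (midE_z0 hE).2.1 (by have := (topF_z0 hF).1; omega)
  · exact Or.inr (Or.inl ⟨hE, hF⟩)
  · exact absurd (midE_z0 hE).1 (by have := botF_z0 hF; omega)
  · exact Or.inr (Or.inr ⟨hE, hF⟩)
  · exact absurd (topE_z0 hE) (by have := (midF_z0 hF).2.1; omega)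
  · exact absurd (topE_z0 hE) (by have := botF_z0 hF; omega)

/-! ### The three diagonal cases -/

lemma eq_of_mid_mid {u v z z' : Fin (d + 2) → ℤ} (hr : 1 ≤ r)
    (h1 : MidE r u z) (h2 : MidF r v z) (h3 : MidE r v z') (h4 : MidF r u z') : u = v := by
  obtain ⟨t1, ha1, ha2, hab, heq1⟩ := h1
  obtain ⟨t2, hb1, hb2, hbb, heq2⟩ := h2
  have hzz : Function.update (pE1 r u) 0 t1 = Function.update (pF1 r v) 0 t2 :=
    heq1 ▸ heq2
  have ht12 : t1 = t2 := by
    have := congrFun hzz 0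
    rwa [Function.update_self, Function.update_self] at this
  have hoff : ∀ j, j ≠ 0 → pE1 r u j = pF1 r v j := by
    intro j hj
    have := congrFun hzz j
    rwa [Function.update_apply, if_neg hj, Function.update_apply, if_neg hj] at this
  have hu0t : u 0 ≤ t1 := by unfold btwn at hab; omega
  have htv0 : t2 ≤ v 0 := by unfold btwn at hbb; omega
  have h3' := midE_z0 h3
  have h4' := midF_z0 h4
  have huv0 : u 0 = v 0 ∧ -r < u 0 ∧ u 0 < r := by
    obtain ⟨t', _, _, hb', heq'⟩ := h3
    obtain ⟨t'', _, _, hb'', heq''⟩ := h4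
    have e : t' = t'' := by
      have := congrFun (heq' ▸ heq'' : Function.update (pE1 r v) 0 t' =
        Function.update (pF1 r u) 0 t'')  0
      rwa [Function.update_self, Function.update_self] at this
    unfold btwn at hb' hb''
    omega
  have haimeq : aimE r u = aimF r v := by
    have := hoff 1 h01.symm
    rwa [pE1_apply, if_pos rfl, pF1_apply, if_pos rfl] at this
  have haimE : aimE r u = u 1 := aimE_of_ne (by omega)
  have haimF : aimF r v = v 1 := aimF_of_ne (by omega)
  funext j
  rcases eq_or_ne j 0 with rfl | hj0
  · exact huv0.1
  · have := hoff j hj0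
    rw [pE1_apply, pF1_apply] at this
    rcases eq_or_ne j 1 with rfl | hj1
    · rwa [if_pos rfl, if_pos rfl, haimE, haimF] at this
    · rwa [if_neg hj1, if_neg hj1] at this

lemma btwn_aim_zero {a A : ℤ} (hr : 1 ≤ r)
    (hA : (A = r ∧ 0 ≤ a) ∨ (A = -r ∧ a < 0) ∨ A = a)
    (h : btwn a A 0) : a = 0 := by
  unfold btwn at h; omega

lemma mid_sign_lemma {a b s s' Av Au : ℤ} (hr : 1 ≤ r)
    (har : -r ≤ a ∧ a ≤ r) (hbr : -r ≤ b ∧ b ≤ r)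
    (h1 : btwn a 0 s) (h2 : s ≠ 0) (h3 : btwn b Av s)
    (h4 : btwn b 0 s') (h5 : s' ≠ 0) (h6 : btwn a Au s')
    (hAv : (Av = r ∧ 0 ≤ b) ∨ (Av = -r ∧ b < 0) ∨ Av = b)
    (hAu : (Au = r ∧ 0 ≤ a) ∨ (Au = -r ∧ a < 0) ∨ Au = a) : a = b := by
  unfold btwn at *; omega

lemma eq_of_top_top {u v z z' : Fin (d + 2) → ℤ} (hr : 1 ≤ r)
    (hub : ∀ i, |u i| ≤ r) (hvb : ∀ i, |v i| ≤ r)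
    (h1 : TopE r u z) (h2 : TopF r v z) (h3 : TopE r v z') (h4 : TopF r u z') : u = v := by
  obtain ⟨hv0, s2, hbs2, heqz⟩ := h2
  obtain ⟨hu0, s4, hbs4, heqz'⟩ := h4
  have haimEu : aimE r u = u 1 := aimE_of_ne (by omega)
  have haimEv : aimE r v = v 1 := aimE_of_ne (by omega)
  have hpE2u : pE2 r u = u := by
    funext j
    rw [pE2_apply]
    rcases eq_or_ne j 0 with rfl | hj0
    · rw [if_pos rfl, hu0]
    · rw [if_neg hj0]
      rcases eq_or_ne j 1 with rfl | hj1
      · rw [if_pos rfl, haimEu]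
      · rw [if_neg hj1]
  have hpE2v : pE2 r v = v := by
    funext j
    rw [pE2_apply]
    rcases eq_or_ne j 0 with rfl | hj0
    · rw [if_pos rfl, hv0]
    · rw [if_neg hj0]
      rcases eq_or_ne j 1 with rfl | hj1
      · rw [if_pos rfl, haimEv]
      · rw [if_neg hj1]
  have hcase : ∀ (a b zz : Fin (d + 2) → ℤ), a 1 = aimE r a →
      pE2 r a = a → zz = Function.update b 1 (zz 1) →
      ((∃ s, btwn (aimE r a) 0 s ∧ s ≠ 0 ∧ zz = Function.update (pE2 r a) 1 s) ∨
        (zz 1 = 0 ∧ PZ a zz)) →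
      ((∃ s, btwn (a 1) 0 s ∧ s ≠ 0 ∧ zz 1 = s ∧ ∀ j, j ≠ 1 → b j = a j) ∨
        (zz 1 = 0 ∧ PZ a zz)) := by
    intro a b zz haim hp2 hzb h
    rcases h with ⟨s, hb, hne, heq⟩ | h
    · left
      rw [hp2] at heq
      have e1 : zz 1 = s := by rw [heq, Function.update_self]
      refine ⟨s, by rwa [← haim] at hb, hne, e1, fun j hj => ?_⟩
      have := congrFun (hzb.symm.trans heq) j
      rwa [Function.update_apply, if_neg hj, Function.update_apply, if_neg hj] at this
    · exact Or.inr h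
  have hz1form : z = Function.update v 1 (z 1) := by
    rw [heqz, Function.update_self]
  have hz'form : z' = Function.update u 1 (z' 1) := by
    rw [heqz', Function.update_self]
  have H1 := hcase u v z haimEu.symm hpE2u hz1form h1.2
  have H2 := hcase v u z' haimEv.symm hpE2v hz'form h3.2
  have hzs2 : z 1 = s2 := by rw [heqz, Function.update_self]
  have hz's4 : z' 1 = s4 := by rw [heqz', Function.update_self]
  have hbz : btwn (v 1) (aimF r v) (z 1) := by rw [hzs2]; exact hbs2
  have hbz' : btwn (u 1) (aimF r u) (z' 1) := by rw [hz's4]; exact hbs4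
  clear hbs2 hbs4 hzs2 hz's4 hz1form hz'form hcase
  have hv1zero : z 1 = 0 → v 1 = 0 := fun h0 =>
    btwn_aim_zero hr (aimF_cases r v) (h0 ▸ hbz)
  have hu1zero : z' 1 = 0 → u 1 = 0 := fun h0 =>
    btwn_aim_zero hr (aimF_cases r u) (h0 ▸ hbz')
  rcases H1 with ⟨s, hbs, hsne, hz1s, hoff⟩ | ⟨hz10, hPZ1⟩
  · rcases H2 with ⟨s', hbs', hsne', hz's, hoff'⟩ | ⟨hz'0, hPZ2⟩
    · funext j
      rcases eq_or_ne j 1 with rfl | hj1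
      · exact mid_sign_lemma hr (abs_le.1 (hub 1)) (abs_le.1 (hvb 1))
          hbs hsne (hz1s ▸ hbz) hbs' hsne' (hz's ▸ hbz')
          (aimF_cases r v) (aimF_cases r u)
      · exact (hoff j hj1).symm
    · have hu1 : u 1 = 0 := hu1zero hz'0
      rw [hu1] at hbs
      unfold btwn at hbs
      omega
  · rcases H2 with ⟨s', hbs', hsne', hz's, hoff'⟩ | ⟨hz'0, hPZ2⟩
    · have hv1 : v 1 = 0 := hv1zero hz10
      rw [hv1] at hbs'
      unfold btwn at hbs'
      omega
    · have hv1 : v 1 = 0 := hv1zero hz10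
      have hu1 : u 1 = 0 := hu1zero hz'0
      have hzv : z = v := by
        rw [heqz, show s2 = v 1 from by
          have : z 1 = s2 := by rw [heqz, Function.update_self]
          omega, Function.update_eq_self]
      have hz'u : z' = u := by
        rw [heqz', show s4 = u 1 from by
          have : z' 1 = s4 := by rw [heqz', Function.update_self]
          omega, Function.update_eq_self]
      rw [hzv] at hPZ1
      rw [hz'u] at hPZ2
      obtain ⟨m, hm, p1, p2, p3⟩ := hPZ1
      obtain ⟨m', hm', q1, q2, q3⟩ := hPZ2
      funext j
      rcases eq_or_ne j 0 with rfl | hj0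
      · rw [hu0, hv0]
      rcases eq_or_ne j 1 with rfl | hj1
      · rw [hu1, hv1]
      have hj2 : 2 ≤ (j : ℕ) := fin_two_le j hj0 hj1
      have P1 := p1 j hj2
      have P2 := p2 j
      have P3 := p3 j
      have Q1 := q1 j hj2
      have Q2 := q2 j
      have Q3 := q3 j
      unfold btwn at P2 Q2
      omega

lemma eq_of_bot_bot {u v z z' : Fin (d + 2) → ℤ} (hr : 1 ≤ r)
    (hub : ∀ i, |u i| ≤ r) (hvb : ∀ i, |v i| ≤ r)
    (h1 : BotE r u z) (h2 : BotF r v z) (h3 : BotE r v z') (h4 : BotF r u z') : u = v := by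
  obtain ⟨hu0, s2, hbs2, heqz⟩ := h1
  obtain ⟨hv0, s4, hbs4, heqz'⟩ := h3
  have haimFu : aimF r u = u 1 := aimF_of_ne (by omega)
  have haimFv : aimF r v = v 1 := aimF_of_ne (by omega)
  have hpF2u : pF2 r u = u := by
    funext j
    rw [pF2_apply]
    rcases eq_or_ne j 0 with rfl | hj0
    · rw [if_pos rfl, hu0]
    · rw [if_neg hj0]
      rcases eq_or_ne j 1 with rfl | hj1
      · rw [if_pos rfl, haimFu]
      · rw [if_neg hj1]
  have hpF2v : pF2 r v = v := by
    funext j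
    rw [pF2_apply]
    rcases eq_or_ne j 0 with rfl | hj0
    · rw [if_pos rfl, hv0]
    · rw [if_neg hj0]
      rcases eq_or_ne j 1 with rfl | hj1
      · rw [if_pos rfl, haimFv]
      · rw [if_neg hj1]
  have hcase : ∀ (a b zz : Fin (d + 2) → ℤ), a 1 = aimF r a →
      pF2 r a = a → zz = Function.update b 1 (zz 1) →
      ((∃ s, btwn (aimF r a) 0 s ∧ s ≠ 0 ∧ zz = Function.update (pF2 r a) 1 s) ∨
        (zz 1 = 0 ∧ PZ a zz)) →
      ((∃ s, btwn (a 1) 0 s ∧ s ≠ 0 ∧ zz 1 = s ∧ ∀ j, j ≠ 1 → b j = a j) ∨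
        (zz 1 = 0 ∧ PZ a zz)) := by
    intro a b zz haim hp2 hzb h
    rcases h with ⟨s, hb, hne, heq⟩ | h
    · left
      rw [hp2] at heq
      have e1 : zz 1 = s := by rw [heq, Function.update_self]
      refine ⟨s, by rwa [← haim] at hb, hne, e1, fun j hj => ?_⟩
      have := congrFun (hzb.symm.trans heq) j
      rwa [Function.update_apply, if_neg hj, Function.update_apply, if_neg hj] at this
    · exact Or.inr h
  have hz1form : z = Function.update u 1 (z 1) := by
    rw [heqz, Function.update_self]
  have hz'form : z' = Function.update v 1 (z' 1) := by
    rw [heqz', Function.update_self]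
  have H1 := hcase v u z haimFv.symm hpF2v hz1form h2.2
  have H2 := hcase u v z' haimFu.symm hpF2u hz'form h4.2
  have hzs2 : z 1 = s2 := by rw [heqz, Function.update_self]
  have hz's4 : z' 1 = s4 := by rw [heqz', Function.update_self]
  have hbz : btwn (u 1) (aimE r u) (z 1) := by rw [hzs2]; exact hbs2
  have hbz' : btwn (v 1) (aimE r v) (z' 1) := by rw [hz's4]; exact hbs4
  have hu1zero : z 1 = 0 → u 1 = 0 := fun h0 =>
    btwn_aim_zero hr (aimE_cases r u) (h0 ▸ hbz)
  have hv1zero : z' 1 = 0 → v 1 = 0 := fun h0 =>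
    btwn_aim_zero hr (aimE_cases r v) (h0 ▸ hbz')
  rcases H1 with ⟨s, hbs, hsne, hz1s, hoff⟩ | ⟨hz10, hPZ1⟩
  · rcases H2 with ⟨s', hbs', hsne', hz's, hoff'⟩ | ⟨hz'0, hPZ2⟩
    · funext j
      rcases eq_or_ne j 1 with rfl | hj1
      · exact (mid_sign_lemma hr (abs_le.1 (hvb 1)) (abs_le.1 (hub 1))
          hbs hsne (hz1s ▸ hbz) hbs' hsne' (hz's ▸ hbz')
          (aimE_cases r u) (aimE_cases r v)).symm
      · exact hoff j hj1
    · have hv1 : v 1 = 0 := hv1zero hz'0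
      rw [hv1] at hbs
      unfold btwn at hbs
      omega
  · rcases H2 with ⟨s', hbs', hsne', hz's, hoff'⟩ | ⟨hz'0, hPZ2⟩
    · have hu1 : u 1 = 0 := hu1zero hz10
      rw [hu1] at hbs'
      unfold btwn at hbs'
      omega
    · have hu1 : u 1 = 0 := hu1zero hz10
      have hv1 : v 1 = 0 := hv1zero hz'0
      have hzu : z = u := by
        rw [heqz, show s2 = u 1 from by
          have : z 1 = s2 := by rw [heqz, Function.update_self]
          omega, Function.update_eq_self]
      have hz'v : z' = v := by
        rw [heqz', show s4 = v 1 from by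
          have : z' 1 = s4 := by rw [heqz', Function.update_self]
          omega, Function.update_eq_self]
      rw [hzu] at hPZ1
      rw [hz'v] at hPZ2
      obtain ⟨m, hm, p1, p2, p3⟩ := hPZ1
      obtain ⟨m', hm', q1, q2, q3⟩ := hPZ2
      funext j
      rcases eq_or_ne j 0 with rfl | hj0
      · rw [hu0, hv0]
      rcases eq_or_ne j 1 with rfl | hj1
      · rw [hu1, hv1]
      have hj2 : 2 ≤ (j : ℕ) := fin_two_le j hj0 hj1
      have P1 := p1 j hj2
      have P2 := p2 j
      have P3 := p3 j
      have Q1 := q1 j hj2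
      have Q2 := q2 j
      have Q3 := q3 j
      unfold btwn at P2 Q2
      omega

lemma paths_disjoint {u v z z' : Fin (d + 2) → ℤ} (hr : 1 ≤ r)
    (hu : u ∈ Sinf (d + 2) r) (hv : v ∈ Sinf (d + 2) r) (huv : u ≠ v)
    (hz1 : z ∈ pathE r u) (hz2 : z ∈ pathF r v)
    (hz3 : z' ∈ pathE r v) (hz4 : z' ∈ pathF r u) : False := by
  have C1 := classify hr (memE hr hu.1 hz1) (memF hr hv.1 hz2)
  have C2 := classify hr (memE hr hv.1 hz3) (memF hr hu.1 hz4)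
  rcases C1 with ⟨hbE, hbF⟩ | ⟨hmE, hmF⟩ | ⟨htE, htF⟩ <;>
    rcases C2 with ⟨hbE', hbF'⟩ | ⟨hmE', hmF'⟩ | ⟨htE', htF'⟩
  · exact huv (eq_of_bot_bot hr hu.1 hv.1 hbE hbF hbE' hbF')
  · have h1 := hbE.1
    have h2 := midF_z0 hmF'
    omega
  · have h1 := hbE.1
    have h2 := (topF_z0 htF').2
    omega
  · have h1 := midF_z0 hmF
    have h2 := hbE'.1
    omega
  · exact huv (eq_of_mid_mid hr hmE hmF hmE' hmF')
  · have h1 := midE_z0 hmE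
    have h2 := (topF_z0 htF').2
    omega
  · have h1 := (topF_z0 htF).2
    have h2 := hbE'.1
    omega
  · have h1 := (topF_z0 htF).2
    have h2 := midE_z0 hmE'
    omega
  · exact huv (eq_of_top_top hr hu.1 hv.1 htE htF htE' htF')

theorem statement10 (d : ℕ) (hd : 2 ≤ d) (r : ℤ) (hr : 1 ≤ r)
    (u v : Fin d → ℤ) (hu : u ∈ Sinf d r) (hv : v ∈ Sinf d r) (huv : u ≠ v) :
    ∃ Q₁ Q₂ : List (Fin d → ℤ),
      (∀ x, ¬ (x ∈ Q₁ ∧ x ∈ Q₂)) ∧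
      ((IsPathInFromTo (Sinf d r) Q₁ u (eVec d r) ∧
          IsPathInFromTo (Sinf d r) Q₂ v (eVec d (-r))) ∨
        (IsPathInFromTo (Sinf d r) Q₁ u (eVec d (-r)) ∧
          IsPathInFromTo (Sinf d r) Q₂ v (eVec d r))) := by
  obtain ⟨k, rfl⟩ : ∃ k, d = k + 2 := ⟨d - 2, by omega⟩
  by_cases hdis : ∀ z ∈ pathE r u, z ∉ pathF r v
  · exact ⟨pathE r u, pathF r v, fun x h => hdis x h.1 h.2,
      Or.inl ⟨pathE_isPath hr hu, pathF_isPath hr hv⟩⟩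
  · push_neg at hdis
    obtain ⟨z, hz1, hz2⟩ := hdis
    refine ⟨pathF r u, pathE r v, ?_, Or.inr ⟨pathF_isPath hr hu, pathE_isPath hr hv⟩⟩
    rintro z' ⟨hz4, hz3⟩
    exact paths_disjoint hr hu hv huv hz1 hz2 hz3 hz4
end

section
/- Let d ≥ 2, t ≥ 1 and L ≥ 2t + 30 be integers, and let w, u ∈ ℤ^d satisfy ‖w‖₁ = L − t, ‖u − w‖₁ = t + 10 and ‖u‖₁ ≤ L − 1. Then there exists an induced path P' in ℤ^d starting at u, passing through w, and ending at a point z with ‖z‖₁ = L, such that every vertex of P' other than u lies in the ball B¹_{t+9}(w) = {x : ‖x−w‖₁ ≤ t+9}, and z is the only vertex of P' whose ℓ1-norm is at least L. -/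
/-- A (self-avoiding) path in the grid graph `ℤ^d`: a nonempty list of distinct
points in which consecutive points are adjacent. -/
def IsPath {d : ℕ} (P : List (Fin d → ℤ)) : Prop :=
  P ≠ [] ∧ P.Nodup ∧ P.Chain' Adj

/-- An induced path in `ℤ^d`: a path in which two of its points are adjacent
iff they are consecutive. -/
def IsInducedPath {d : ℕ} (P : List (Fin d → ℤ)) : Prop :=
  IsPath P ∧ ∀ i j : Fin P.length, (i : ℕ) + 1 < (j : ℕ) → ¬ Adj (P.get i) (P.get j)

namespace St13

lemma norm1_comm {d : ℕ} (x y : Fin d → ℤ) : norm1 (x - y) = norm1 (y - x) := by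
  unfold norm1
  refine Finset.sum_congr rfl fun i _ => ?_
  simp [abs_sub_comm]

def psum (g : ℕ → ℕ) (n : ℕ) : ℕ := ∑ j ∈ Finset.range n, g j

lemma psum_succ (g : ℕ → ℕ) (n : ℕ) : psum g (n+1) = psum g n + g n :=
  Finset.sum_range_succ g n

lemma psum_mono (g : ℕ → ℕ) {m n : ℕ} (h : m ≤ n) : psum g m ≤ psum g n :=
  Finset.sum_le_sum_of_subset (Finset.range_subset_range.2 h)

lemma tiling (g : ℕ → ℕ) (k n : ℕ) :
    ∑ i ∈ Finset.range n, min (k - psum g i) (g i) = min k (psum g n) := by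
  induction n with
  | zero => simp [psum]
  | succ n ih =>
    rw [Finset.sum_range_succ, ih, psum_succ]
    omega

-- geodesic function gives an induced path
section geo
variable {d : ℕ} (N : ℕ) (f : ℕ → (Fin d → ℤ))
  (hgeo : ∀ j k : ℕ, j ≤ k → k ≤ N → norm1 (f k - f j) = (k : ℤ) - j)

include hgeo

lemma geo_induced : IsInducedPath ((List.range (N+1)).map f) := by
  have hlen : ((List.range (N+1)).map f).length = N + 1 := by simp
  have hget : ∀ (i : Fin ((List.range (N+1)).map f).length),
      ((List.range (N+1)).map f).get i = f i := by
    intro i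
    simp
  constructor
  · refine ⟨by simp, ?_, ?_⟩
    · refine List.Nodup.map_on ?_ List.nodup_range
      intro x hx y hy hxy
      simp only [List.mem_range] at hx hy
      rcases le_total x y with h | h
      · have := hgeo x y h (by omega)
        rw [hxy, sub_self] at this
        have : (y : ℤ) - x = 0 := by
          rw [← this]; unfold norm1; simp
        omega
      · have := hgeo y x h (by omega)
        rw [hxy, sub_self] at this
        have : (x : ℤ) - y = 0 := by
          rw [← this]; unfold norm1; simp
        omega
    · apply List.isChain_iff_getElem.2
      intro i hi
      simp only [List.getElem_map, List.getElem_range]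
      show norm1 _ = 1
      rw [hlen] at hi
      rw [norm1_comm]
      have := hgeo i (i+1) (by omega) (by omega)
      rw [this]; push_cast; ring
  · intro i j hij
    rw [hget, hget]
    intro hadj
    have hi : (i:ℕ) < N + 1 := by have := i.isLt; omega
    have hj : (j:ℕ) < N + 1 := by have := j.isLt; omega
    have h2 := hgeo i j (by omega) (by omega)
    have : norm1 (f j - f i) = 1 := by rw [norm1_comm]; exact hadj
    rw [this] at h2
    omega

end geo

end St13

namespace St13

def ext (d : ℕ) (g : Fin d → ℕ) : ℕ → ℕ := fun n => if h : n < d then g ⟨n, h⟩ else 0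

lemma ext_val {d : ℕ} (g : Fin d → ℕ) (i : Fin d) : ext d g i.val = g i := by
  simp [ext, i.isLt]

lemma master {d : ℕ} (u w : Fin d → ℤ) (i₀ : Fin d) (t L : ℤ) (tt : ℕ)
    (a b : Fin d → ℕ) (σ : Fin d → ℤ)
    (htt : (tt : ℤ) = t) (ht : 1 ≤ t)
    (hw : norm1 w = L - t) (huw : norm1 (u - w) = t + 10) (hu : norm1 u ≤ L - 1)
    (h1 : ∀ i, (σ i).natAbs = 1)
    (hC : ∀ i, ∀ q : ℕ, (q:ℤ) ≤ (a i : ℤ) + b i + (if i = i₀ then (tt:ℤ) else 0) →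
        ((u i + σ i * q).natAbs : ℤ) = ((u i).natAbs : ℤ) + q - 2 * min (q:ℤ) ((a i : ℤ)))
    (hCw : ∀ i, u i + σ i * ((a i : ℤ) + (b i : ℤ)) = w i) :
    ∃ (P' : List (Fin d → ℤ)) (hne : P' ≠ []),
      IsInducedPath P' ∧
      P'.head hne = u ∧
      w ∈ P' ∧
      norm1 (P'.getLast hne) = L ∧
      (∀ x ∈ P', x ≠ u → norm1 (x - w) ≤ t + 9) ∧
      (∀ x ∈ P', L ≤ norm1 x → x = P'.getLast hne) := by
  classical
  set a' : ℕ → ℕ := ext d a with ha'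
  set b' : ℕ → ℕ := ext d b with hb'
  set A : ℕ := psum a' d with hA
  set B : ℕ := psum b' d with hB
  set K : ℕ := A + B with hK
  set N : ℕ := K + tt with hN
  set p : Fin d → ℕ → ℕ := fun i k =>
    min (k - psum a' i.val) (a i) + min (k - (A + psum b' i.val)) (b i)
      + (if i = i₀ then min (k - K) tt else 0) with hp
  set f : ℕ → (Fin d → ℤ) := fun k i => u i + σ i * (p i k : ℤ) with hf
  have hav : ∀ i : Fin d, a' i.val = a i := fun i => ext_val a i
  have hbv : ∀ i : Fin d, b' i.val = b i := fun i => ext_val b i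
  have hDA : ∀ i : Fin d, psum a' i.val + a i ≤ A := by
    intro i
    have h := psum_mono a' i.isLt
    rw [psum_succ, hav] at h
    exact h
  have hEK : ∀ i : Fin d, A + psum b' i.val + b i ≤ K := by
    intro i
    have h := psum_mono b' i.isLt
    rw [psum_succ, hbv] at h
    omega
  have hSp : ∀ k : ℕ, (∑ i, p i k) = min k A + min (k - A) B + min (k - K) tt := by
    intro k
    rw [hp]
    rw [Finset.sum_add_distrib, Finset.sum_add_distrib]
    congr 1
    · congr 1
      · rw [hA, ← tiling a' k d,
          ← Fin.sum_univ_eq_sum_range (fun j => min (k - psum a' j) (a' j)) d]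
        refine Finset.sum_congr rfl fun i _ => ?_
        rw [hav]
      · rw [hB, ← tiling b' (k - A) d,
          ← Fin.sum_univ_eq_sum_range (fun j => min (k - A - psum b' j) (b' j)) d]
        refine Finset.sum_congr rfl fun i _ => ?_
        rw [hbv]
        congr 1
        omega
    · simp
  have hpmono : ∀ (i : Fin d) {j k : ℕ}, j ≤ k → p i j ≤ p i k := by
    intro i j k hjk
    rw [hp]
    simp only
    have h1' : j - psum a' i.val ≤ k - psum a' i.val := by omega
    have h2' : j - (A + psum b' i.val) ≤ k - (A + psum b' i.val) := by omega
    have h3' : j - K ≤ k - K := by omega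
    split <;> omega
  have hpbound : ∀ (i : Fin d) (k : ℕ),
      ((p i k : ℕ):ℤ) ≤ (a i : ℤ) + b i + (if i = i₀ then (tt:ℤ) else 0) := by
    intro i k
    rw [hp]
    simp only
    split <;> push_cast <;> omega
  -- geodesic property
  have hgeo : ∀ j k : ℕ, j ≤ k → k ≤ N → norm1 (f k - f j) = (k : ℤ) - j := by
    intro j k hjk hkN
    unfold norm1
    have hco : ∀ i : Fin d, |(f k - f j) i| = (p i k : ℤ) - (p i j : ℤ) := by
      intro i
      have hmul : (f k - f j) i = σ i * ((p i k : ℤ) - (p i j : ℤ)) := by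
        simp [hf]; ring
      rw [hmul, abs_mul]
      have habs : |σ i| = 1 := by
        have h := h1 i
        rw [Int.abs_eq_natAbs, h]
        rfl
      rw [habs, one_mul, abs_of_nonneg]
      have := hpmono i hjk
      omega
    rw [Finset.sum_congr rfl fun i _ => hco i, Finset.sum_sub_distrib]
    have e1 : (∑ i, ((p i k : ℕ):ℤ)) = ((∑ i, p i k : ℕ) : ℤ) := by push_cast; rfl
    have e2 : (∑ i, ((p i j : ℕ):ℤ)) = ((∑ i, p i j : ℕ) : ℤ) := by push_cast; rfl
    rw [e1, e2, hSp k, hSp j]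
    have hjN : j ≤ N := le_trans hjk hkN
    have g1 : min k A + min (k - A) B + min (k - K) tt = k := by omega
    have g2 : min j A + min (j - A) B + min (j - K) tt = j := by omega
    rw [g1, g2]
  -- norm of f k
  have hminp : ∀ (i : Fin d) (k : ℕ), min (p i k) (a i) = min (k - psum a' i.val) (a i) := by
    intro i k
    have hda := hDA i
    have hek := hEK i
    rw [hp]
    simp only
    split <;> omega
  have hsmin : ∀ k : ℕ, (∑ i, min (p i k) (a i)) = min k A := by
    intro k
    rw [Finset.sum_congr rfl fun i _ => hminp i k]
    rw [hA, ← tiling a' k d,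
      ← Fin.sum_univ_eq_sum_range (fun j => min (k - psum a' j) (a' j)) d]
    refine Finset.sum_congr rfl fun i _ => ?_
    rw [hav]
  have hnu : norm1 u = ∑ i, ((u i).natAbs : ℤ) := by
    unfold norm1
    exact Finset.sum_congr rfl fun i _ => Int.abs_eq_natAbs _
  have hnf : ∀ k : ℕ, k ≤ N → norm1 (f k) = norm1 u + (k:ℤ) - 2 * ((min k A : ℕ) : ℤ) := by
    intro k hk
    unfold norm1
    have hco : ∀ i : Fin d, |f k i| =
        ((u i).natAbs : ℤ) + ((p i k : ℕ):ℤ) - 2 * min ((p i k : ℕ):ℤ) ((a i : ℕ):ℤ) := by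
      intro i
      rw [hf]
      simp only
      rw [Int.abs_eq_natAbs, hC i (p i k) (hpbound i k)]
    rw [Finset.sum_congr rfl fun i _ => hco i]
    rw [Finset.sum_sub_distrib, Finset.sum_add_distrib, ← Finset.mul_sum]
    have e1 : (∑ i, ((p i k : ℕ):ℤ)) = ((∑ i, p i k : ℕ) : ℤ) := by push_cast; rfl
    have e2 : (∑ i, min ((p i k : ℕ):ℤ) ((a i : ℕ):ℤ)) = ((∑ i, min (p i k) (a i) : ℕ) : ℤ) := by
      push_cast; rfl
    rw [e1, e2, hSp k, hsmin k, ← hnu]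
    have g1 : min k A + min (k - A) B + min (k - K) tt = k := by omega
    rw [g1]
    rfl
  -- endpoints and w
  have hf0 : f 0 = u := by
    funext i
    rw [hf]
    simp only
    have : p i 0 = 0 := by
      rw [hp]; simp only
      split <;> omega
    rw [this]
    push_cast
    ring
  have hfK : f K = w := by
    funext i
    rw [hf]
    simp only
    have : p i K = a i + b i := by
      have hda := hDA i
      have hek := hEK i
      rw [hp]; simp only
      split <;> omega
    rw [this]
    push_cast
    exact hCw i
  -- key numeric facts
  have hAB : (A:ℤ) + B = t + 10 := by
    have hco : ∀ i : Fin d, |(u - w) i| = (a i : ℤ) + b i := by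
      intro i
      have h2 : (u - w) i = -(σ i * ((a i : ℤ) + b i)) := by
        have := hCw i
        simp only [Pi.sub_apply]
        omega
      rw [h2, abs_neg, abs_mul]
      have habs : |σ i| = 1 := by
        have h := h1 i
        rw [Int.abs_eq_natAbs, h]; rfl
      rw [habs, one_mul, abs_of_nonneg (by positivity)]
    have : norm1 (u - w) = ∑ i, ((a i : ℤ) + b i) := by
      unfold norm1
      exact Finset.sum_congr rfl fun i _ => hco i
    rw [huw] at this
    have eA : (A:ℤ) = ∑ i, (a i : ℤ) := by
      rw [hA, psum, ← Fin.sum_univ_eq_sum_range (fun j => a' j) d]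
      push_cast
      exact Finset.sum_congr rfl fun i _ => by rw [hav]
    have eB : (B:ℤ) = ∑ i, (b i : ℤ) := by
      rw [hB, psum, ← Fin.sum_univ_eq_sum_range (fun j => b' j) d]
      push_cast
      exact Finset.sum_congr rfl fun i _ => by rw [hbv]
    rw [eA, eB, ← Finset.sum_add_distrib]
    omega
  have hKN : K ≤ N := by omega
  have hwnorm : norm1 w = norm1 u + (K:ℤ) - 2 * A := by
    have := hnf K hKN
    rw [hfK] at this
    rw [this]
    have : min K A = A := by omega
    rw [this]
  -- norms along the path
  have hnle : ∀ k : ℕ, k < N → norm1 (f k) ≤ L - 1 := by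
    intro k hk
    rw [hnf k (by omega)]
    rcases le_or_gt k A with h | h
    · have : min k A = k := by omega
      rw [this]
      omega
    · have : min k A = A := by omega
      rw [this]
      -- norm1 u + k - 2A < norm1 u + N - 2A = norm1 w + t = L
      have hcast : (K:ℤ) = A + B := by push_cast [hK]; ring
      have hNc : (N:ℤ) = K + tt := by push_cast [hN]; ring
      have hkc : (k:ℤ) < (N:ℤ) := by exact_mod_cast hk
      omega
  have hnN : norm1 (f N) = L := by
    rw [hnf N le_rfl]
    have : min N A = A := by omega
    rw [this]
    have hcast : (K:ℤ) = A + B := by push_cast [hK]; ring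
    have hNc : (N:ℤ) = K + tt := by push_cast [hN]; ring
    omega
  -- distance to w
  have hdw : ∀ k : ℕ, 1 ≤ k → k ≤ N → norm1 (f k - w) ≤ t + 9 := by
    intro k h1k hkN
    rw [← hfK]
    have hKc : (K:ℤ) = A + B := by push_cast [hK]; ring
    rcases le_or_gt k K with h | h
    · rw [norm1_comm]
      rw [hgeo k K h (by omega)]
      have : (1:ℤ) ≤ k := by exact_mod_cast h1k
      have : (k:ℤ) ≤ K := by exact_mod_cast h
      omega
    · rw [hgeo K k (by omega) hkN]
      have : (k:ℤ) ≤ N := by exact_mod_cast hkN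
      have hNc : (N:ℤ) = K + tt := by push_cast [hN]; ring
      omega
  -- assemble the list
  have hlast : ∀ h, (((List.range (N+1)).map f).getLast h) = f N := by
    intro h
    rw [List.getLast_eq_getElem]
    simp
  have hmem : ∀ x ∈ (List.range (N+1)).map f, ∃ k ≤ N, f k = x := by
    intro x hx
    simp only [List.mem_map, List.mem_range] at hx
    obtain ⟨k, hk, rfl⟩ := hx
    exact ⟨k, by omega, rfl⟩
  refine ⟨(List.range (N+1)).map f, by simp, geo_induced N f hgeo, ?_, ?_, ?_, ?_, ?_⟩
  · rw [List.head_eq_getElem]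
    simp [hf0]
  · rw [← hfK]
    exact List.mem_map_of_mem (f := f) (by simp; omega)
  · rw [hlast]
    exact hnN
  · intro x hx hxu
    obtain ⟨k, hk, rfl⟩ := hmem x hx
    rcases Nat.eq_zero_or_pos k with rfl | hkpos
    · exact absurd hf0 hxu
    · exact hdw k hkpos hk
  · intro x hx hLx
    obtain ⟨k, hk, rfl⟩ := hmem x hx
    rcases lt_or_eq_of_le hk with h | rfl
    · exact absurd hLx (by have := hnle k h; omega)
    · rw [hlast]

end St13

namespace St13

def mid (x y : ℤ) : ℤ := max (min x y) (min (max x y) 0)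

def aa {d : ℕ} (u w : Fin d → ℤ) (i : Fin d) : ℕ := (u i - mid (u i) (w i)).natAbs

def bb {d : ℕ} (u w : Fin d → ℤ) (i : Fin d) : ℕ := (w i - mid (u i) (w i)).natAbs

def sg {d : ℕ} (u w : Fin d → ℤ) (i₀ : Fin d) (ε : ℤ) (i : Fin d) : ℤ :=
  if i = i₀ then ε else if u i ≤ w i then 1 else -1

end St13


theorem statement13 (d : ℕ) (hd : 2 ≤ d) (t L : ℤ) (ht : 1 ≤ t)
    (hL : 2 * t + 30 ≤ L) (w u : Fin d → ℤ)
    (hw : norm1 w = L - t) (huw : norm1 (u - w) = t + 10) (hu : norm1 u ≤ L - 1) :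
    ∃ (P' : List (Fin d → ℤ)) (hne : P' ≠ []),
      IsInducedPath P' ∧
      P'.head hne = u ∧
      w ∈ P' ∧
      norm1 (P'.getLast hne) = L ∧
      (∀ x ∈ P', x ≠ u → norm1 (x - w) ≤ t + 9) ∧
      (∀ x ∈ P', L ≤ norm1 x → x = P'.getLast hne) := by
  classical
  have hgood : ∃ (i₀ : Fin d) (ε : ℤ), ε.natAbs = 1 ∧ 0 ≤ ε * w i₀ ∧ 0 ≤ ε * (w i₀ - u i₀) := by
    by_contra hbad
    push_neg at hbad
    have hco : ∀ i : Fin d, |u i| = |w i| + |u i - w i| := by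
      intro i
      have h1 := hbad i 1 (by decide) 
      have h2 := hbad i (-1) (by decide)
      simp only [one_mul, neg_mul, neg_sub] at h1 h2
      rw [Int.abs_eq_natAbs, Int.abs_eq_natAbs, Int.abs_eq_natAbs]
      omega
    have hsum : norm1 u = norm1 w + norm1 (u - w) := by
      unfold norm1
      rw [← Finset.sum_add_distrib]
      refine Finset.sum_congr rfl fun i _ => ?_
      rw [Pi.sub_apply]
      exact hco i
    omega
  obtain ⟨i₀, ε, hε1, hε2, hε3⟩ := hgood
  have htt : ((t.toNat : ℕ) : ℤ) = t := Int.toNat_of_nonneg (by omega)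
  have hεc : ε = 1 ∨ ε = -1 := by omega
  apply St13.master u w i₀ t L t.toNat (St13.aa u w) (St13.bb u w) (St13.sg u w i₀ ε)
    htt ht hw huw hu
  · intro i
    unfold St13.sg
    split
    · exact hε1
    · split <;> rfl
  · intro i q hq
    simp only [St13.sg, St13.aa, St13.bb, St13.mid] at hq ⊢
    by_cases hi : i = i₀
    · subst hi
      simp only [eq_self_iff_true, if_true] at hq ⊢
      rcases hεc with rfl | rfl <;> omega
    · simp only [if_neg hi] at hq ⊢
      by_cases h2 : u i ≤ w i
      · simp only [if_pos h2]
        omega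
      · simp only [if_neg h2]
        omega
  · intro i
    simp only [St13.sg, St13.aa, St13.bb, St13.mid]
    by_cases hi : i = i₀
    · subst hi
      simp only [eq_self_iff_true, if_true]
      rcases hεc with rfl | rfl <;> omega
    · simp only [if_neg hi]
      by_cases h2 : u i ≤ w i
      · simp only [if_pos h2]
        omega
      · simp only [if_neg h2]
        omega
end
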